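/- arXiv:1308.4439 — 5 statements merged into one kernel-verified Lean document; each statement's English description precedes it below -/
import Mathlib

section
/- For every λ = (λ_0,…,λ_N) ∈ K^{N+1} with λ_0 ≠ 0 and ‖λ_i/λ_0‖ < 1 for i = 1,…,N, the family of terms of the series Φ evaluated at λ is summable in K, and the sum Φ(λ) satisfies ‖Φ(λ)‖ = 1; in particular Φ(λ) ≠ 0. -/
open scoped BigOperators Classical

namespace AHG

/-- `hat v = (1, v) ∈ ℤ^{n+1}`: coordinate `0` equals `1`, the rest is `v`. -/
def hat {n : ℕ} (v : Fin n → ℤ) : Fin (n + 1) → ℤ := Fin.cons 1 v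

/-- The coefficients `b_i` of the Dwork series
`θ(t) = exp(π(t - t^p)) = exp(πt)·exp(-πt^p) = Σ b_i t^i`;
explicitly `b_i = Σ_{j + p k = i} π^{j+k} (-1)^k / (j! k!)`. -/
noncomputable def dworkB (p : ℕ) {K : Type*} [Field K] (π : K) (i : ℕ) : K :=
  ∑ k ∈ Finset.range (i + 1),
    if p * k ≤ i then
      ((-1 : K) ^ k * π ^ (i - p * k + k)) /
        ((Nat.factorial (i - p * k) : K) * (Nat.factorial k : K))
    else 0

/-- The real cone `C` generated by `â_0, …, â_N`. -/
def cone {n N : ℕ} (a : Fin (N + 1) → Fin n → ℤ) : Set (Fin (n + 1) → ℝ) :=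
  {x | ∃ t : Fin (N + 1) → ℝ, (∀ j, 0 ≤ t j) ∧
      x = ∑ j, t j • fun i => (hat (a j) i : ℝ)}

/-- `M = C ∩ ℤA`. -/
def latticeM {n N : ℕ} (a : Fin (N + 1) → Fin n → ℤ) : Set (Fin (n + 1) → ℤ) :=
  {μ | (fun i => (μ i : ℝ)) ∈ cone a ∧
      μ ∈ AddSubgroup.closure (Set.range fun j => hat (a j))}

/-- `M°`: the elements of `M` lying on no proper (exposed) face of `C`, i.e. every linear
functional nonnegative on `C` and vanishing at `μ` vanishes identically on `C`. -/
def latticeMint {n N : ℕ} (a : Fin (N + 1) → Fin n → ℤ) : Set (Fin (n + 1) → ℤ) :=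
  {μ | μ ∈ latticeM a ∧
      ∀ ℓ : (Fin (n + 1) → ℝ) →ₗ[ℝ] ℝ, (∀ x ∈ cone a, 0 ≤ ℓ x) →
        ℓ (fun i => (μ i : ℝ)) = 0 → ∀ x ∈ cone a, ℓ x = 0}

/-- `a 0` is the unique lattice point interior to `Δ = conv(a 1, …, a N)`. -/
def uniqueInteriorPoint {n N : ℕ} (a : Fin (N + 1) → Fin n → ℤ) : Prop :=
  (fun i => (a 0 i : ℝ)) ∈
      interior (convexHull ℝ (Set.range fun j : Fin N => fun i => (a j.succ i : ℝ))) ∧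
    ∀ v : Fin n → ℤ,
      (fun i => (v i : ℝ)) ∈
          interior (convexHull ℝ (Set.range fun j : Fin N => fun i => (a j.succ i : ℝ))) →
        v = a 0

/-- The set `L_+`, identified with the tuples `(l_1,…,l_N) ∈ ℤ_{≥0}^N` such that
`Σ l_i â_i = (Σ l_i) â_0` (then `l_0 = -Σ l_i`). -/
def LplusSet {n N : ℕ} (a : Fin (N + 1) → Fin n → ℤ) : Set (Fin N → ℕ) :=
  {l | ∑ i : Fin N, l i • hat (a i.succ) = (∑ i : Fin N, l i) • hat (a 0)}

/-- The norm (sup of coefficient norms) of an element of `R`, i.e. of a formal power series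
in the variables `λ_i/λ_0`, `i = 1, …, N`. -/
noncomputable def Rnorm {N : ℕ} {K : Type*} [NormedField K]
    (f : MvPowerSeries (Fin N) K) : ℝ :=
  ⨆ ν : Fin N →₀ ℕ, ‖f ν‖

/-- Membership in `R`: bounded coefficients. -/
def memR {N : ℕ} {K : Type*} [NormedField K] (f : MvPowerSeries (Fin N) K) : Prop :=
  BddAbove (Set.range fun ν : Fin N →₀ ℕ => ‖f ν‖)

/-- Norm-convergence (in the sup norm of `R`) of a series of elements of `R` to `g`. -/
def HasSumR {ι : Type*} {N : ℕ} {K : Type*} [NormedField K]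
    (f : ι → MvPowerSeries (Fin N) K) (g : MvPowerSeries (Fin N) K) : Prop :=
  Filter.Tendsto (fun s : Finset ι => Rnorm (g - ∑ i ∈ s, f i)) Filter.atTop (nhds 0)

/-- Invertibility in `R`. -/
def invR {N : ℕ} {K : Type*} [NormedField K] (f : MvPowerSeries (Fin N) K) : Prop :=
  memR f ∧ ∃ g : MvPowerSeries (Fin N) K, memR g ∧ f * g = 1

/-- `B_μ(1, y_1, …, y_N)` as a power series (in fact a polynomial) in `y_i = λ_i/λ_0`:
the coefficient of `y^ν` is `b_{ν_0} b_{ν_1} ⋯ b_{ν_N}` where `ν_0 = μ_0 - Σ ν_i`,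
whenever `(ν_0, ν_1, …, ν_N)` is a nonnegative solution of `Σ ν_i â_i = μ`, and `0` otherwise. -/
noncomputable def Bone (p : ℕ) {n N : ℕ} (a : Fin (N + 1) → Fin n → ℤ)
    {K : Type*} [Field K] (π : K) (μ : Fin (n + 1) → ℤ) : MvPowerSeries (Fin N) K :=
  fun ν =>
    if 0 ≤ μ 0 - ∑ i : Fin N, (ν i : ℤ) ∧
        (μ 0 - ∑ i : Fin N, (ν i : ℤ)) • hat (a 0) +
          ∑ i : Fin N, (ν i : ℤ) • hat (a i.succ) = μ then
      dworkB p π (μ 0 - ∑ i : Fin N, (ν i : ℤ)).toNat * ∏ i : Fin N, dworkB p π (ν i)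
    else 0

/-- The substitution `λ_i/λ_0 ↦ λ_i^p/λ_0^p` on `R`, i.e. `ξ(λ) ↦ ξ(λ^p)`. -/
noncomputable def frobR (p : ℕ) {N : ℕ} {K : Type*} [Field K]
    (f : MvPowerSeries (Fin N) K) : MvPowerSeries (Fin N) K :=
  fun ν => if h : ∃ ν' : Fin N →₀ ℕ, p • ν' = ν then f h.choose else 0

/-- The term indexed by `ν ∈ M°` in the series defining `η_ρ`:
`π^{ρ_0-ν_0} B_{pν-ρ}(1, λ_1/λ_0, …, λ_N/λ_0) ξ_ν(λ^p)` when `pν - ρ ∈ M`, else `0`. -/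
noncomputable def etaTerm (p : ℕ) {n N : ℕ} (a : Fin (N + 1) → Fin n → ℤ)
    {K : Type*} [Field K] (π : K)
    (ξ : {μ : Fin (n + 1) → ℤ // μ ∈ latticeMint a} → MvPowerSeries (Fin N) K)
    (ρ : Fin (n + 1) → ℤ) (ν : {μ : Fin (n + 1) → ℤ // μ ∈ latticeMint a}) :
    MvPowerSeries (Fin N) K :=
  if (p : ℤ) • ν.1 - ρ ∈ latticeM a then
    π ^ (ρ 0 - ν.1 0) • (Bone p a π ((p : ℤ) • ν.1 - ρ) * frobR p (ξ ν))
  else 0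


/-- The index type `M°` (as a subtype). -/
abbrev Msub {n N : ℕ} (a : Fin (N + 1) → Fin n → ℤ) : Type _ :=
  {μ : Fin (n + 1) → ℤ // μ ∈ latticeMint a}

/-- Membership in `S`: a family `(ξ_μ)_{μ ∈ M°}` of elements of `R` with uniformly
bounded coefficients. -/
def memS {n N : ℕ} (a : Fin (N + 1) → Fin n → ℤ) {K : Type*} [NormedField K]
    (ξ : {μ : Fin (n + 1) → ℤ // μ ∈ latticeMint a} → MvPowerSeries (Fin N) K) : Prop :=
  BddAbove (Set.range
    fun q : {μ : Fin (n + 1) → ℤ // μ ∈ latticeMint a} × (Fin N →₀ ℕ) => ‖ξ q.1 q.2‖)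

/-- The norm on `S`. -/
noncomputable def Snorm {n N : ℕ} (a : Fin (N + 1) → Fin n → ℤ) {K : Type*} [NormedField K]
    (ξ : {μ : Fin (n + 1) → ℤ // μ ∈ latticeMint a} → MvPowerSeries (Fin N) K) : ℝ :=
  ⨆ μ : {μ : Fin (n + 1) → ℤ // μ ∈ latticeMint a}, Rnorm (ξ μ)

/-- The truncation `Φ_1` of `Φ`, as a function of `λ = (λ_0, …, λ_N)`. -/
noncomputable def Phi1 (p : ℕ) {n N : ℕ} (a : Fin (N + 1) → Fin n → ℤ)
    {K : Type*} [Field K] (lam : Fin (N + 1) → K) : K :=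
  ∑ l ∈ (Fintype.piFinset fun _ : Fin N => Finset.range p).filter
      (fun l => l ∈ LplusSet a ∧ ∑ i : Fin N, l i ≤ p - 1),
    (-1 : K) ^ (∑ i : Fin N, l i) * (Nat.multinomial Finset.univ l : K) *
      ∏ i : Fin N, (lam i.succ / lam 0) ^ l i

/-- The open polydisk `𝒟`. -/
def Dopen {N : ℕ} {K : Type*} [NormedField K] : Set (Fin (N + 1) → K) :=
  {lam | lam 0 ≠ 0 ∧ ∀ i : Fin N, ‖lam i.succ / lam 0‖ < 1}

/-- The region `𝒟_+`. -/
def Dplus (p : ℕ) {n N : ℕ} (a : Fin (N + 1) → Fin n → ℤ) {K : Type*} [NormedField K] :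
    Set (Fin (N + 1) → K) :=
  {lam | lam 0 ≠ 0 ∧ (∀ i : Fin N, ‖lam i.succ / lam 0‖ ≤ 1) ∧ ‖Phi1 p a lam‖ = 1}

/-- `f` is (on `𝒟_+`) a rational function of `λ_1/λ_0, …, λ_N/λ_0` defined at every
point of `𝒟_+`. -/
def RatOnDplus (p : ℕ) {n N : ℕ} (a : Fin (N + 1) → Fin n → ℤ) {K : Type*} [NormedField K]
    (f : (Fin (N + 1) → K) → K) : Prop :=
  ∃ q r : MvPolynomial (Fin N) K,
    (∀ lam ∈ Dplus p a (K := K), MvPolynomial.eval (fun i => lam i.succ / lam 0) r ≠ 0) ∧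
    ∀ lam ∈ Dplus p a (K := K),
      f lam = MvPolynomial.eval (fun i => lam i.succ / lam 0) q /
        MvPolynomial.eval (fun i => lam i.succ / lam 0) r

/-- `F` is a uniform limit on `𝒟_+` of rational functions in the `λ_i/λ_0` defined
at every point of `𝒟_+`. -/
def UnifLimitRat (p : ℕ) {n N : ℕ} (a : Fin (N + 1) → Fin n → ℤ) {K : Type*} [NormedField K]
    (F : (Fin (N + 1) → K) → K) : Prop :=
  ∃ u : ℕ → (Fin (N + 1) → K) → K, (∀ k, RatOnDplus p a (u k)) ∧
    TendstoUniformlyOn u F Filter.atTop (Dplus p a (K := K))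

/-- Membership in `R'`: the power series converges on `𝒟` and its sum extends to an
element of `R'`, i.e. to a uniform limit on `𝒟_+` of rational functions in the `λ_i/λ_0`
defined at every point of `𝒟_+`. -/
def memR' (p : ℕ) {n N : ℕ} (a : Fin (N + 1) → Fin n → ℤ) {K : Type*} [NormedField K]
    (c : MvPowerSeries (Fin N) K) : Prop :=
  ∃ F : (Fin (N + 1) → K) → K, UnifLimitRat p a F ∧
    ∀ lam ∈ Dopen (N := N) (K := K),
      HasSum (fun ν : Fin N →₀ ℕ => c ν * ∏ i : Fin N, (lam i.succ / lam 0) ^ ν i) (F lam)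

/-- Invertibility in `R'`. -/
def invR' (p : ℕ) {n N : ℕ} (a : Fin (N + 1) → Fin n → ℤ) {K : Type*} [NormedField K]
    (f : MvPowerSeries (Fin N) K) : Prop :=
  memR' p a f ∧ ∃ g : MvPowerSeries (Fin N) K, memR' p a g ∧ f * g = 1

/-- Membership in `S'`. -/
def memS' (p : ℕ) {n N : ℕ} (a : Fin (N + 1) → Fin n → ℤ) {K : Type*} [NormedField K]
    (ξ : {μ : Fin (n + 1) → ℤ // μ ∈ latticeMint a} → MvPowerSeries (Fin N) K) : Prop :=
  memS a ξ ∧ ∀ μ, memR' p a (ξ μ)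

/-- Membership in `T`: `ξ ∈ S`, `ξ_{â_0} = 1` and `‖ξ‖ = 1`; the distinguished index
`μ0 ∈ M°` is the point `â_0`. -/
def memT {n N : ℕ} (a : Fin (N + 1) → Fin n → ℤ) {K : Type*} [NormedField K]
    (μ0 : {μ : Fin (n + 1) → ℤ // μ ∈ latticeMint a})
    (ξ : {μ : Fin (n + 1) → ℤ // μ ∈ latticeMint a} → MvPowerSeries (Fin N) K) : Prop :=
  memS a ξ ∧ ξ μ0 = 1 ∧ Snorm a ξ = 1

/-- `ζ` is a value of the map `β` at `ξ`: `ζ = α*(ξ)/η_{â_0}`, where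
`α*(ξ) = (η_ρ)_{ρ ∈ M°}` is given by the norm-convergent series of `etaTerm`s. -/
def isBeta (p : ℕ) {n N : ℕ} (a : Fin (N + 1) → Fin n → ℤ) {K : Type*} [NormedField K] (π : K)
    (μ0 : {μ : Fin (n + 1) → ℤ // μ ∈ latticeMint a})
    (ξ ζ : {μ : Fin (n + 1) → ℤ // μ ∈ latticeMint a} → MvPowerSeries (Fin N) K) : Prop :=
  ∃ η : {μ : Fin (n + 1) → ℤ // μ ∈ latticeMint a} → MvPowerSeries (Fin N) K,
    (∀ ρ, HasSumR (etaTerm p a π ξ ρ.1) (η ρ)) ∧ ∀ ρ, ζ ρ = η ρ * (η μ0)⁻¹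

/-- The coefficients `ξ_ρ` (Eq. (3.4) of the paper) of
`ξ(λ,x) = γ°(G(λ_0,x) ∏_{i=1}^N exp(πλ_i x^{â_i}))`:
`ξ_ρ = Σ (-1)^{ρ_0-1+Σl_i} (ρ_0-1+Σl_i)!/(l_1!⋯l_N!) ∏ (λ_i/λ_0)^{l_i}`, summed over
`(l_1,…,l_N) ∈ ℤ_{≥0}^N` such that `l_0 := ρ_0-1+Σl_i ≥ 0` and
`Σ l_i â_i - (l_0+1) â_0 = -ρ`. -/
noncomputable def xiRho {n N : ℕ} (a : Fin (N + 1) → Fin n → ℤ) (K : Type*) [Field K]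
    (ρ : Fin (n + 1) → ℤ) : MvPowerSeries (Fin N) K :=
  fun l =>
    if 0 ≤ ρ 0 - 1 + ∑ i : Fin N, (l i : ℤ) ∧
        (∑ i : Fin N, (l i : ℤ) • hat (a i.succ)) -
          (ρ 0 + ∑ i : Fin N, (l i : ℤ)) • hat (a 0) = -ρ then
      (-1 : K) ^ (ρ 0 - 1 + ∑ i : Fin N, (l i : ℤ)) *
        ((ρ 0 - 1 + ∑ i : Fin N, (l i : ℤ)).toNat.factorial : K) /
        ((∏ i : Fin N, (l i).factorial : ℕ) : K)
    else 0

/-- The series `Φ`, as a formal power series in the variables `λ_i/λ_0`. -/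
noncomputable def PhiSeries {n N : ℕ} (a : Fin (N + 1) → Fin n → ℤ) (K : Type*) [Field K] :
    MvPowerSeries (Fin N) K :=
  fun l =>
    if (fun i => l i) ∈ LplusSet a then
      (-1 : K) ^ (∑ i : Fin N, l i) * (Nat.multinomial Finset.univ l : K)
    else 0

/-- The truncation `Φ_1` of `Φ`, as a formal power series in the variables `λ_i/λ_0`. -/
noncomputable def Phi1Series (p : ℕ) {n N : ℕ} (a : Fin (N + 1) → Fin n → ℤ)
    (K : Type*) [Field K] : MvPowerSeries (Fin N) K :=
  fun l =>
    if (fun i => l i) ∈ LplusSet a ∧ ∑ i : Fin N, l i ≤ p - 1 then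
      (-1 : K) ^ (∑ i : Fin N, l i) * (Nat.multinomial Finset.univ l : K)
    else 0

/-- `B_μ(λ_0, …, λ_N)` as a function of `λ` (a finite sum; `finsum` junk value `0`
is irrelevant since the relevant index set is finite). -/
noncomputable def Bfull (p : ℕ) {n N : ℕ} (a : Fin (N + 1) → Fin n → ℤ)
    {K : Type*} [Field K] (π : K) (μ : Fin (n + 1) → ℤ) (lam : Fin (N + 1) → K) : K :=
  finsum fun ν : Fin (N + 1) → ℕ =>
    if ∑ j, ν j • hat (a j) = μ then
      (∏ j, dworkB p π (ν j)) * ∏ j, lam j ^ ν j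
    else 0

end AHG

open scoped BigOperators Classical


/-- for `λ ∈ 𝒟` the family of terms of `Φ(λ)` is summable, and the sum has
norm `1`; in particular it is nonzero. -/
theorem stmt_1 (p : ℕ) [Fact p.Prime] (hp2 : p ≠ 2)
    {K : Type*} [NormedField K] [IsUltrametricDist K] [CompleteSpace K] [IsAlgClosed K]
    (ι : ℚ_[p] →+* K) (hι : ∀ x, ‖ι x‖ = ‖x‖)
    (n N : ℕ) (hn : 0 < n) (hN : 0 < N) (a : Fin (N + 1) → Fin n → ℤ)
    (lam : Fin (N + 1) → K) (hlam : lam ∈ AHG.Dopen (N := N) (K := K)) :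
    Summable (fun l : AHG.LplusSet a =>
      (-1 : K) ^ (∑ i : Fin N, l.1 i) * (Nat.multinomial Finset.univ l.1 : K) *
        ∏ i : Fin N, (lam i.succ / lam 0) ^ l.1 i) ∧
    ‖∑' l : AHG.LplusSet a,
        (-1 : K) ^ (∑ i : Fin N, l.1 i) * (Nat.multinomial Finset.univ l.1 : K) *
          ∏ i : Fin N, (lam i.succ / lam 0) ^ l.1 i‖ = 1 ∧
    (∑' l : AHG.LplusSet a,
        (-1 : K) ^ (∑ i : Fin N, l.1 i) * (Nat.multinomial Finset.univ l.1 : K) *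
          ∏ i : Fin N, (lam i.succ / lam 0) ^ l.1 i) ≠ 0 := by
  
  obtain ⟨h0, hlt⟩ := hlam
  haveI : Nonempty (Fin N) := ⟨⟨0, hN⟩⟩
  set y : Fin N → K := fun i => lam i.succ / lam 0 with hy
  set f : AHG.LplusSet a → K := fun l =>
    (-1 : K) ^ (∑ i : Fin N, l.1 i) * (Nat.multinomial Finset.univ l.1 : K) *
      ∏ i : Fin N, y i ^ l.1 i with hfdef
  have hne : (Finset.univ : Finset (Fin N)).Nonempty := Finset.univ_nonempty
  set r : ℝ := Finset.univ.sup' hne fun i => ‖y i‖ with hr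
  have hr0 : 0 ≤ r := le_trans (norm_nonneg (y ⟨0, hN⟩))
    (Finset.le_sup' (f := fun i => ‖y i‖) (Finset.mem_univ ⟨0, hN⟩))
  have hr1 : r < 1 := by
    rw [hr, Finset.sup'_lt_iff]
    exact fun i _ => hlt i
  have hyr : ∀ i : Fin N, ‖y i‖ ≤ r := fun i => Finset.le_sup' (f := fun i => ‖y i‖) (Finset.mem_univ i)
  have bound : ∀ l : Fin N → ℕ,
      ‖(-1 : K) ^ (∑ i : Fin N, l i) * (Nat.multinomial Finset.univ l : K) *
        ∏ i : Fin N, y i ^ l i‖ ≤ r ^ (∑ i : Fin N, l i) := by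
    intro l
    have h1 : ‖(-1 : K) ^ (∑ i : Fin N, l i) * (Nat.multinomial Finset.univ l : K)‖ ≤ 1 := by
      rw [norm_mul, norm_pow, norm_neg, norm_one, one_pow, one_mul]
      exact IsUltrametricDist.norm_natCast_le_one K _
    have h2 : ‖∏ i : Fin N, y i ^ l i‖ ≤ r ^ (∑ i : Fin N, l i) := by
      rw [norm_prod, ← Finset.prod_pow_eq_pow_sum]
      refine Finset.prod_le_prod (fun i _ => by positivity) fun i _ => ?_
      rw [norm_pow]
      exact pow_le_pow_left₀ (norm_nonneg _) (hyr i) _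
    calc ‖(-1 : K) ^ (∑ i : Fin N, l i) * (Nat.multinomial Finset.univ l : K) *
          ∏ i : Fin N, y i ^ l i‖
        ≤ ‖(-1 : K) ^ (∑ i : Fin N, l i) * (Nat.multinomial Finset.univ l : K)‖ *
          ‖∏ i : Fin N, y i ^ l i‖ := norm_mul_le _ _
      _ ≤ 1 * (r ^ (∑ i : Fin N, l i)) := by
          exact mul_le_mul h1 h2 (norm_nonneg _) zero_le_one
      _ = r ^ (∑ i : Fin N, l i) := one_mul _
  have htend : Filter.Tendsto f Filter.cofinite (nhds 0) := by
    rw [Metric.tendsto_nhds]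
    intro ε hε
    rw [Filter.eventually_cofinite]
    have hpow : Filter.Tendsto (fun s : ℕ => r ^ s) Filter.atTop (nhds 0) :=
      tendsto_pow_atTop_nhds_zero_of_lt_one hr0 hr1
    obtain ⟨C, hC⟩ := (Metric.tendsto_atTop.mp hpow) ε hε
    have hfin : ({m : Fin N → ℕ | ∀ i, m i < C} : Set (Fin N → ℕ)).Finite := by
      have : ({m : Fin N → ℕ | ∀ i, m i < C} : Set (Fin N → ℕ)) =
          Set.pi Set.univ fun _ => Set.Iio C := by
        ext m; simp [Set.mem_pi]
      rw [this]
      exact Set.Finite.pi fun _ => Set.finite_Iio C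
    refine Set.Finite.subset (Set.Finite.preimage Set.injOn_subtype_val hfin) ?_
    intro l hl
    simp only [Set.mem_preimage, Set.mem_setOf_eq]
    intro i
    by_contra hge
    push_neg at hge
    have hs : C ≤ ∑ i : Fin N, l.1 i :=
      le_trans hge (Finset.single_le_sum (fun i _ => Nat.zero_le _) (Finset.mem_univ i))
    have := hC _ hs
    rw [Real.dist_eq, sub_zero, abs_of_nonneg (pow_nonneg hr0 _)] at this
    apply hl
    have hb := bound l.1
    calc dist (f l) 0 = ‖f l‖ := by rw [dist_zero_right]
      _ ≤ r ^ (∑ i : Fin N, l.1 i) := hb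
      _ < ε := this
  have hsum : Summable f := NonarchimedeanAddGroup.summable_of_tendsto_cofinite_zero htend
  have hmem0 : (fun _ : Fin N => 0) ∈ AHG.LplusSet a := by
    show ∑ i : Fin N, (0 : ℕ) • AHG.hat (a i.succ) = (∑ _i : Fin N, (0 : ℕ)) • AHG.hat (a 0)
    simp
  set l₀ : AHG.LplusSet a := ⟨fun _ => 0, hmem0⟩ with hl₀
  have hf0 : f l₀ = 1 := by
    simp [hfdef, hl₀, Nat.multinomial]
  have hrest : ∀ l : AHG.LplusSet a, ‖if l = l₀ then 0 else f l‖ ≤ r := by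
    intro l
    by_cases h : l = l₀
    · simp [h, hr0]
    · rw [if_neg h]
      have hne0 : l.1 ≠ fun _ => 0 := fun hc => h (Subtype.ext hc)
      have : ∃ i, l.1 i ≠ 0 := by
        by_contra hc
        push_neg at hc
        exact hne0 (funext hc)
      obtain ⟨i, hi⟩ := this
      have hs1 : 1 ≤ ∑ i : Fin N, l.1 i :=
        le_trans (Nat.one_le_iff_ne_zero.mpr hi)
          (Finset.single_le_sum (fun i _ => Nat.zero_le _) (Finset.mem_univ i))
      calc ‖f l‖ ≤ r ^ (∑ i : Fin N, l.1 i) := bound l.1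
        _ ≤ r ^ 1 := pow_le_pow_of_le_one hr0 hr1.le hs1
        _ = r := pow_one r
  have hsplit : ∑' l, f l = f l₀ + ∑' l, if l = l₀ then 0 else f l :=
    Summable.tsum_eq_add_tsum_ite hsum l₀
  have hrestnorm : ‖∑' l, if l = l₀ then 0 else f l‖ ≤ r :=
    IsUltrametricDist.norm_tsum_le_of_forall_le_of_nonneg hr0 hrest
  have hnorm : ‖∑' l, f l‖ = 1 := by
    rw [hsplit, hf0]
    have hne1 : ‖(1 : K)‖ ≠ ‖∑' l, if l = l₀ then 0 else f l‖ := by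
      rw [norm_one]
      exact fun hc => absurd (hc ▸ hrestnorm) (not_le.mpr hr1)
    rw [IsUltrametricDist.norm_add_eq_max_of_norm_ne_norm hne1, norm_one]
    exact max_eq_left (hrestnorm.trans hr1.le)
  exact ⟨hsum, hnorm, by rw [← norm_pos_iff]; rw [hnorm]; norm_num⟩
end

section
/- Every coefficient b_i of the Dwork series θ satisfies ‖b_i‖ ≤ p^{−i(p−1)/p²}. -/
open scoped BigOperators Classical

open scoped BigOperators Classical


namespace DworkProof
open PowerSeries Finset


variable (p : ℕ) [Fact p.Prime]

/-- `exp (c * t^r)` as an explicit power series over `ℚ_[p]`. -/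
noncomputable def Pser (c : ℚ_[p]) (r : ℕ) : PowerSeries ℚ_[p] :=
  PowerSeries.mk fun i => if r ∣ i then c ^ (i / r) / (Nat.factorial (i / r) : ℚ_[p]) else 0

lemma coeff_Pser (c : ℚ_[p]) (r i : ℕ) :
    (coeff i) (Pser p c r) =
      if r ∣ i then c ^ (i / r) / (Nat.factorial (i / r) : ℚ_[p]) else 0 :=
  coeff_mk _ _

lemma coeff_zero_Pser (c : ℚ_[p]) (r : ℕ) : (coeff 0) (Pser p c r) = 1 := by
  simp [coeff_Pser]

lemma constantCoeff_Pser (c : ℚ_[p]) (r : ℕ) : constantCoeff (Pser p c r) = 1 := by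
  rw [← coeff_zero_eq_constantCoeff, coeff_zero_Pser]

/-- reindexing sums over the antidiagonal restricted to multiples of `r`. -/
lemma sum_antidiagonal_dvd {M : Type*} [AddCommMonoid M] (r : ℕ) (hr : 0 < r) (m : ℕ)
    (G : ℕ → ℕ → M) :
    (∑ x ∈ Finset.HasAntidiagonal.antidiagonal (r * m),
        if r ∣ x.1 ∧ r ∣ x.2 then G (x.1 / r) (x.2 / r) else 0) =
      ∑ y ∈ Finset.HasAntidiagonal.antidiagonal m, G y.1 y.2 := by
  rw [← Finset.sum_filter]
  refine Finset.sum_nbij' (fun x => (x.1 / r, x.2 / r)) (fun y => (r * y.1, r * y.2)) ?_ ?_ ?_ ?_ ?_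
  · rintro ⟨a, b⟩ hab
    simp only [Finset.mem_filter, Finset.HasAntidiagonal.mem_antidiagonal] at hab
    obtain ⟨hsum, ⟨u, rfl⟩, ⟨v, rfl⟩⟩ := hab
    simp only [Finset.HasAntidiagonal.mem_antidiagonal]
    rw [Nat.mul_div_cancel_left _ hr, Nat.mul_div_cancel_left _ hr]
    rw [← Nat.mul_add] at hsum
    exact Nat.eq_of_mul_eq_mul_left hr hsum
  · rintro ⟨u, v⟩ huv
    simp only [Finset.HasAntidiagonal.mem_antidiagonal] at huv
    simp only [Finset.mem_filter, Finset.HasAntidiagonal.mem_antidiagonal]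
    exact ⟨by rw [← Nat.mul_add, huv], ⟨u, rfl⟩, ⟨v, rfl⟩⟩
  · rintro ⟨a, b⟩ hab
    simp only [Finset.mem_filter, Finset.HasAntidiagonal.mem_antidiagonal] at hab
    obtain ⟨hsum, ⟨u, rfl⟩, ⟨v, rfl⟩⟩ := hab
    simp only [Nat.mul_div_cancel_left _ hr]
  · rintro ⟨u, v⟩ _
    simp only [Nat.mul_div_cancel_left _ hr]
  · rintro ⟨a, b⟩ hab
    simp only [Finset.mem_filter, Finset.HasAntidiagonal.mem_antidiagonal] at hab
    rfl

lemma Pser_mul_Pser (c d : ℚ_[p]) (r : ℕ) (hr : 0 < r) :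
    Pser p c r * Pser p d r = Pser p (c + d) r := by
  ext i
  rw [PowerSeries.coeff_mul]
  simp only [coeff_Pser, ite_zero_mul_ite_zero]
  by_cases h : r ∣ i
  · obtain ⟨m, rfl⟩ := h
    rw [if_pos ⟨m, rfl⟩, Nat.mul_div_cancel_left _ hr,
      sum_antidiagonal_dvd r hr m (fun u v => c ^ u / u.factorial * (d ^ v / v.factorial))]
    rw [Finset.Nat.sum_antidiagonal_eq_sum_range_succ_mk, add_pow, Finset.sum_div]
    refine Finset.sum_congr rfl fun k hk => ?_
    rw [Finset.mem_range] at hk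
    have hk' : k ≤ m := by omega
    rw [Nat.cast_choose ℚ_[p] hk']
    have h1 : ((k.factorial : ℚ_[p])) ≠ 0 := Nat.cast_ne_zero.2 k.factorial_ne_zero
    have h2 : (((m - k).factorial : ℚ_[p])) ≠ 0 := Nat.cast_ne_zero.2 (m - k).factorial_ne_zero
    have h3 : ((m.factorial : ℚ_[p])) ≠ 0 := Nat.cast_ne_zero.2 m.factorial_ne_zero
    field_simp
  · rw [if_neg h]
    apply Finset.sum_eq_zero
    rintro ⟨a, b⟩ hab
    rw [Finset.HasAntidiagonal.mem_antidiagonal] at hab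
    rw [if_neg]
    rintro ⟨ha, hb⟩
    exact h (hab ▸ dvd_add ha hb)


lemma Pser_zero (r : ℕ) (hr : 0 < r) : Pser p 0 r = 1 := by
  ext i
  rw [coeff_Pser, PowerSeries.coeff_one]
  by_cases hi : i = 0
  · subst hi; simp
  · rw [if_neg hi]
    by_cases h : r ∣ i
    · rw [if_pos h, zero_pow, zero_div]
      exact Nat.div_ne_zero_iff.2 ⟨by omega, Nat.le_of_dvd (by omega) h⟩
    · rw [if_neg h]

lemma Pser_pow (c : ℚ_[p]) (r : ℕ) (hr : 0 < r) (k : ℕ) :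
    Pser p c r ^ k = Pser p ((k : ℚ_[p]) * c) r := by
  induction k with
  | zero => simp [Pser_zero p r hr]
  | succ n ih =>
      rw [pow_succ, ih, Pser_mul_Pser p _ _ r hr]
      have : ((n : ℚ_[p]) * c + c) = ((n + 1 : ℕ) : ℚ_[p]) * c := by push_cast; ring
      rw [this]

/-- substitution `t ↦ t^p` on power series. -/
noncomputable def subP (f : PowerSeries ℚ_[p]) : PowerSeries ℚ_[p] :=
  PowerSeries.mk fun i => if p ∣ i then (coeff (i / p)) f else 0

lemma coeff_subP (f : PowerSeries ℚ_[p]) (i : ℕ) :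
    (coeff i) (subP p f) = if p ∣ i then (coeff (i / p)) f else 0 :=
  coeff_mk _ _

lemma hp_pos : 0 < p := (Fact.out : p.Prime).pos

lemma subP_mul (f g : PowerSeries ℚ_[p]) : subP p (f * g) = subP p f * subP p g := by
  ext i
  rw [PowerSeries.coeff_mul, coeff_subP]
  simp only [coeff_subP, ite_zero_mul_ite_zero]
  by_cases h : p ∣ i
  · obtain ⟨m, rfl⟩ := h
    rw [if_pos ⟨m, rfl⟩, Nat.mul_div_cancel_left _ (hp_pos p), PowerSeries.coeff_mul,
      ← sum_antidiagonal_dvd p (hp_pos p) m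
        (fun u v => (coeff u) f * (coeff v) g)]
  · rw [if_neg h]
    symm
    apply Finset.sum_eq_zero
    rintro ⟨a, b⟩ hab
    rw [Finset.HasAntidiagonal.mem_antidiagonal] at hab
    rw [if_neg]
    rintro ⟨ha, hb⟩
    exact h (hab ▸ dvd_add ha hb)

lemma subP_Pser (c : ℚ_[p]) (r : ℕ) (hr : 0 < r) : subP p (Pser p c r) = Pser p c (p * r) := by
  have hpr : 0 < p * r := Nat.mul_pos (hp_pos p) hr
  ext i
  rw [coeff_subP, coeff_Pser, coeff_Pser]
  by_cases h : p * r ∣ i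
  · obtain ⟨m, rfl⟩ := h
    have h1 : p * r ∣ p * r * m := ⟨m, rfl⟩
    have h2 : p ∣ p * r * m := ⟨r * m, by ring⟩
    have h3 : p * r * m / p = r * m := by rw [mul_assoc, Nat.mul_div_cancel_left _ (hp_pos p)]
    have h4 : r ∣ r * m := ⟨m, rfl⟩
    rw [if_pos h1, if_pos h2, h3, if_pos h4, Nat.mul_div_cancel_left _ hr,
      Nat.mul_div_cancel_left _ hpr]
  · rw [if_neg h]
    by_cases hpi : p ∣ i
    · obtain ⟨m, rfl⟩ := hpi
      have h2 : p ∣ p * m := ⟨m, rfl⟩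
      rw [if_pos h2, Nat.mul_div_cancel_left _ (hp_pos p), if_neg]
      rintro ⟨u, rfl⟩
      exact h ⟨u, by ring⟩
    · rw [if_neg hpi]

/-- the truncated Artin–Hasse product `∏_{j ≤ J} exp(t^{p^j} / p^j)`. -/
noncomputable def FAH (J : ℕ) : PowerSeries ℚ_[p] :=
  ∏ j ∈ Finset.range (J + 1), Pser p (((p : ℚ_[p]) ^ j)⁻¹) (p ^ j)

lemma subP_FAH (J : ℕ) :
    subP p (FAH p J) = ∏ j ∈ Finset.range (J + 1), Pser p (((p : ℚ_[p]) ^ j)⁻¹) (p ^ (j + 1)) := by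
  induction J with
  | zero =>
      rw [FAH, Finset.prod_range_one, Finset.prod_range_one,
        subP_Pser p _ _ (pow_pos (hp_pos p) 0)]
      norm_num
  | succ n ih =>
      rw [FAH, Finset.prod_range_succ, subP_mul, ← FAH, ih,
        subP_Pser p _ _ (pow_pos (hp_pos p) (n + 1)), Finset.prod_range_succ,
        Finset.prod_range_succ]
      rw [show p * p ^ (n + 1) = p ^ (n + 1 + 1) from (pow_succ' p (n + 1)).symm,
        Finset.prod_range_succ]

lemma FAH_pow_p (J : ℕ) :
    FAH p (J + 1) ^ p = Pser p (p : ℚ_[p]) 1 * subP p (FAH p J) := by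
  have hp0 : ((p : ℚ_[p])) ≠ 0 := Nat.cast_ne_zero.2 (hp_pos p).ne'
  rw [subP_FAH, FAH, ← Finset.prod_pow]
  have : ∀ j, Pser p (((p : ℚ_[p]) ^ j)⁻¹) (p ^ j) ^ p
      = Pser p ((p : ℚ_[p]) * ((p : ℚ_[p]) ^ j)⁻¹) (p ^ j) := fun j =>
    Pser_pow p _ _ (pow_pos (hp_pos p) j) p
  simp only [this]
  rw [Finset.prod_range_succ']
  have h0 : (p : ℚ_[p]) * ((p : ℚ_[p]) ^ 0)⁻¹ = (p : ℚ_[p]) := by simp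
  rw [h0, mul_comm]
  congr 1
  refine Finset.prod_congr rfl fun j _ => ?_
  have : (p : ℚ_[p]) * ((p : ℚ_[p]) ^ (j + 1))⁻¹ = ((p : ℚ_[p]) ^ j)⁻¹ := by
    rw [pow_succ, mul_inv]
    field_simp
  rw [this]

lemma constantCoeff_FAH (J : ℕ) : (coeff 0) (FAH p J) = 1 := by
  rw [coeff_zero_eq_constantCoeff, FAH, map_prod]
  simp [constantCoeff_Pser]

lemma coeff_mul_Pser_high (f : PowerSeries ℚ_[p]) (c : ℚ_[p]) (r m : ℕ) (hm : m < r) :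
    (coeff m) (f * Pser p c r) = (coeff m) f := by
  rw [PowerSeries.coeff_mul]
  rw [Finset.sum_eq_single (m, 0)]
  · rw [coeff_zero_Pser, mul_one]
  · rintro ⟨a, b⟩ hab hne
    rw [Finset.HasAntidiagonal.mem_antidiagonal] at hab
    have hb : b ≠ 0 := by
      intro h
      subst h
      exact hne (by rw [← hab]; rfl)
    rw [coeff_Pser, if_neg, mul_zero]
    intro hdvd
    have := Nat.le_of_dvd (by omega) hdvd
    omega
  · intro h
    exact absurd (Finset.HasAntidiagonal.mem_antidiagonal.2 (by simp)) h

lemma coeff_FAH_stab (J K m : ℕ) (hJK : J ≤ K) (hm : m < p ^ (J + 1)) :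
    (coeff m) (FAH p K) = (coeff m) (FAH p J) := by
  induction K with
  | zero => rw [Nat.le_zero.1 hJK]
  | succ n ih =>
      rcases Nat.lt_or_ge J (n + 1) with h | h
      · have hJn : J ≤ n := by omega
        rw [FAH, Finset.prod_range_succ, ← FAH, coeff_mul_Pser_high, ih hJn]
        calc m < p ^ (J + 1) := hm
          _ ≤ p ^ (n + 1) := Nat.pow_le_pow_right (hp_pos p) (by omega)
      · rw [show J = n + 1 by omega]

/-- the Artin–Hasse coefficients. -/
noncomputable def ahc (m : ℕ) : ℚ_[p] := (coeff m) (FAH p m)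

lemma coeff_FAH_eq_ahc (m J : ℕ) (hm : m < p ^ (J + 1)) :
    (coeff m) (FAH p J) = ahc p m := by
  have hpm : m < p ^ (m + 1) :=
    lt_of_lt_of_le (Nat.lt_pow_self (n := m) (Fact.out : p.Prime).one_lt)
      (Nat.pow_le_pow_right (hp_pos p) (by omega))
  rcases Nat.le_total m J with h | h
  · rw [ahc, coeff_FAH_stab p m J m h hpm]
  · rw [ahc, coeff_FAH_stab p J m m h hm]

lemma ahc_zero : ahc p 0 = 1 := by
  rw [ahc, constantCoeff_FAH]


lemma digitsum_pos (k : ℕ) (hk : k ≠ 0) : 1 ≤ (p.digits k).sum := by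
  have hnil : p.digits k ≠ [] := Nat.digits_ne_nil_iff_ne_zero.2 hk
  have hlast := Nat.getLast_digit_ne_zero p hk
  have hmem := List.getLast_mem hnil
  calc 1 ≤ (p.digits k).getLast hnil := Nat.one_le_iff_ne_zero.2 hlast
    _ ≤ (p.digits k).sum := List.single_le_sum (fun x _ => Nat.zero_le x) _ hmem

lemma factorial_val_le (k : ℕ) (hk : 1 ≤ k) : padicValNat p (k.factorial) ≤ k - 1 := by
  have h := sub_one_mul_padicValNat_factorial (p := p) k
  have hs := digitsum_pos p k (by omega)
  have hp2 : 2 ≤ p := (Fact.out : p.Prime).two_le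
  have hv : padicValNat p (k.factorial) ≤ (p - 1) * padicValNat p (k.factorial) :=
    Nat.le_mul_of_pos_left _ (by omega)
  omega

lemma norm_pPow_div_factorial (k : ℕ) (hk : 1 ≤ k) :
    ‖((p : ℚ_[p]) ^ k / (k.factorial : ℚ_[p]))‖ ≤ (p : ℝ)⁻¹ := by
  have hp1 : (1 : ℝ) < (p : ℝ) := by
    exact_mod_cast (Fact.out : p.Prime).one_lt
  have hfac : ((k.factorial : ℚ_[p])) ≠ 0 := Nat.cast_ne_zero.2 k.factorial_ne_zero
  rw [norm_div, norm_pow, Padic.norm_p, Padic.norm_eq_zpow_neg_valuation hfac,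
    Padic.valuation_natCast]
  have h1 : ((p : ℝ)⁻¹) ^ k = (p : ℝ) ^ (-(k : ℤ)) := by
    rw [zpow_neg, zpow_natCast, inv_pow]
  rw [h1, ← zpow_sub₀ (by positivity : (p : ℝ) ≠ 0)]
  have h2 : (p : ℝ)⁻¹ = (p : ℝ) ^ (-1 : ℤ) := (zpow_neg_one _).symm
  rw [h2]
  apply zpow_le_zpow_right₀ (le_of_lt hp1)
  have := factorial_val_le p k hk
  omega

/-- congruence of coefficients of powers under truncation. -/
lemma coeff_pow_congr (f g : PowerSeries ℚ_[p]) (m : ℕ)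
    (h : ∀ l ≤ m, (coeff l) f = (coeff l) g) (k : ℕ) :
    ∀ l ≤ m, (coeff l) (f ^ k) = (coeff l) (g ^ k) := by
  induction k with
  | zero => intro l _; rfl
  | succ n ih =>
      intro l hl
      rw [pow_succ, pow_succ, PowerSeries.coeff_mul, PowerSeries.coeff_mul]
      refine Finset.sum_congr rfl fun x hx => ?_
      rw [Finset.HasAntidiagonal.mem_antidiagonal] at hx
      rw [ih x.1 (by omega), h x.2 (by omega)]

/-- The Artin–Hasse coefficients are `p`-integral. -/
lemma ahc_norm_le_one (m : ℕ) : ‖ahc p m‖ ≤ 1 := by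
  induction m using Nat.strong_induction_on with
  | _ m IH =>
  rcases Nat.eq_zero_or_pos m with rfl | hm
  · rw [ahc_zero]; exact le_of_eq norm_one
  have hp2 : 2 ≤ p := (Fact.out : p.Prime).two_le
  have hppos : (0 : ℝ) < (p : ℝ) := by exact_mod_cast hp_pos p
  set am := ahc p m with ham
  -- the truncated series
  set Qs : PowerSeries ℚ_[p] := PowerSeries.mk (fun l => if l < m then ahc p l else 0) with hQs
  have hQscoeff : ∀ l, (coeff l) Qs = if l < m then ahc p l else 0 := fun l => coeff_mk _ _
  have hQs0 : constantCoeff Qs = 1 := by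
    rw [← coeff_zero_eq_constantCoeff, hQscoeff, if_pos hm, ahc_zero]
  set f := FAH p (m + 1) with hf
  have hfcoeff : ∀ l ≤ m, (coeff l) f = ahc p l := by
    intro l hl
    apply coeff_FAH_eq_ahc
    calc l ≤ m := hl
      _ < p ^ (m + 1) := Nat.lt_pow_self (n := m) (Fact.out : p.Prime).one_lt |>.trans_le
          (Nat.pow_le_pow_right (hp_pos p) (by omega))
      _ ≤ p ^ (m + 2) := Nat.pow_le_pow_right (hp_pos p) (by omega)
  -- the `g` decomposition
  set g : PowerSeries ℚ_[p] := Qs + PowerSeries.C am * PowerSeries.X ^ m with hg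
  have hfg : ∀ l ≤ m, (coeff l) f = (coeff l) g := by
    intro l hl
    rw [hfcoeff l hl, hg, map_add, hQscoeff, PowerSeries.coeff_C_mul,
      PowerSeries.coeff_X_pow]
    rcases Nat.lt_or_ge l m with h | h
    · rw [if_pos h, if_neg (by omega), mul_zero, add_zero]
    · have : l = m := by omega
      subst this
      rw [if_neg (by omega), if_pos rfl, mul_one, zero_add]
  -- key extraction : coeff m (f^p) = coeff m (Qs^p) + p * am
  have key1 : (coeff m) (f ^ p) = (coeff m) (Qs ^ p) + (p : ℚ_[p]) * am := by
    rw [coeff_pow_congr p f g m hfg p m le_rfl, hg, add_pow]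
    rw [map_sum]
    have hterm : ∀ k ∈ Finset.range (p + 1),
        (coeff m) (Qs ^ k * (PowerSeries.C am * PowerSeries.X ^ m) ^ (p - k)
            * ((p.choose k : ℕ) : PowerSeries ℚ_[p]))
          = (if k = p then (coeff m) (Qs ^ p) else 0)
            + (if k = p - 1 then (p : ℚ_[p]) * am else 0) := by
      intro k hk
      rw [Finset.mem_range] at hk
      have hrw : Qs ^ k * (PowerSeries.C am * PowerSeries.X ^ m) ^ (p - k)
            * ((p.choose k : ℕ) : PowerSeries ℚ_[p])
          = (Qs ^ k * PowerSeries.C (am ^ (p - k) * (p.choose k : ℚ_[p])))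
            * PowerSeries.X ^ (m * (p - k)) := by
        rw [mul_pow, ← map_pow, ← pow_mul, map_mul, ← map_natCast (PowerSeries.C (R := ℚ_[p]))]
        ring
      rw [hrw, PowerSeries.coeff_mul_X_pow']
      rcases Nat.lt_or_ge k (p - 1) with hklt | hkge
      · -- k ≤ p - 2 : coefficient vanishes
        rw [if_neg ?_, if_neg (by omega), if_neg (by omega), add_zero]
        intro hle
        have : m * 2 ≤ m * (p - k) := Nat.mul_le_mul_left m (by omega)
        omega
      · rcases Nat.lt_or_ge k p with hkp | hkp
        · -- k = p - 1
          have hkeq : k = p - 1 := by omega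
          subst hkeq
          have hpk : p - (p - 1) = 1 := by omega
          rw [hpk, mul_one, if_pos le_rfl, Nat.sub_self, pow_one,
            Nat.choose_symm (by omega : 1 ≤ p), Nat.choose_one_right]
          rw [coeff_zero_eq_constantCoeff, map_mul, map_pow, hQs0, one_pow, one_mul,
            PowerSeries.constantCoeff_C]
          rw [if_neg (by omega), if_pos rfl, zero_add]
          ring
        · -- k = p
          have hkeq : k = p := by omega
          subst hkeq
          rw [Nat.sub_self, mul_zero, if_pos (Nat.zero_le m), Nat.sub_zero, pow_zero,
            Nat.choose_self, Nat.cast_one, mul_one, map_one, mul_one]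
          rw [if_pos rfl, if_neg (by omega), add_zero]
    rw [Finset.sum_congr rfl hterm, Finset.sum_add_distrib,
      Finset.sum_ite_eq' (Finset.range (p + 1)) p,
      Finset.sum_ite_eq' (Finset.range (p + 1)) (p - 1)]
    rw [if_pos (Finset.mem_range.2 (by omega)), if_pos (Finset.mem_range.2 (by omega))]
  -- the Frobenius relation
  have key2 : f ^ p = Pser p (p : ℚ_[p]) 1 * subP p (FAH p m) := FAH_pow_p p m
  -- the target `t`
  set t : ℚ_[p] := if p ∣ m then ahc p (m / p) else 0 with ht
  -- bound on the right-hand side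
  have key3 : ‖(coeff m) (f ^ p) - t‖ ≤ (p : ℝ)⁻¹ := by
    rw [key2, PowerSeries.coeff_mul, Finset.Nat.sum_antidiagonal_eq_sum_range_succ_mk,
      Finset.sum_range_succ']
    have h0 : (coeff 0) (Pser p (p : ℚ_[p]) 1) * (coeff (m - 0)) (subP p (FAH p m))
        = t := by
      rw [coeff_zero_Pser, one_mul, Nat.sub_zero, coeff_subP, ht]
      by_cases h : p ∣ m
      · rw [if_pos h, if_pos h, coeff_FAH_eq_ahc]
        calc m / p ≤ m := Nat.div_le_self m p
          _ < p ^ (m + 1) := Nat.lt_pow_self (n := m) (Fact.out : p.Prime).one_lt |>.trans_le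
              (Nat.pow_le_pow_right (hp_pos p) (by omega))
      · rw [if_neg h, if_neg h]
    rw [h0, add_sub_cancel_right]
    apply IsUltrametricDist.norm_sum_le_of_forall_le_of_nonneg (by positivity)
    intro k hk
    rw [Finset.mem_range] at hk
    rw [norm_mul]
    have h1 : ‖(coeff (k + 1)) (Pser p (p : ℚ_[p]) 1)‖ ≤ (p : ℝ)⁻¹ := by
      rw [coeff_Pser, if_pos (one_dvd _), Nat.div_one]
      exact norm_pPow_div_factorial p (k + 1) (by omega)
    have h2 : ‖(coeff (m - (k + 1))) (subP p (FAH p m))‖ ≤ 1 := by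
      rw [coeff_subP]
      by_cases h : p ∣ (m - (k + 1))
      · rw [if_pos h, coeff_FAH_eq_ahc]
        · apply IH
          calc (m - (k + 1)) / p ≤ m - (k + 1) := Nat.div_le_self _ _
            _ < m := by omega
        · calc (m - (k + 1)) / p ≤ m := (Nat.div_le_self _ _).trans (by omega)
            _ < p ^ (m + 1) := Nat.lt_pow_self (n := m) (Fact.out : p.Prime).one_lt |>.trans_le
                (Nat.pow_le_pow_right (hp_pos p) (by omega))
      · rw [if_neg h, norm_zero]; norm_num
    calc ‖(coeff (k + 1)) (Pser p (p : ℚ_[p]) 1)‖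
          * ‖(coeff (m - (k + 1))) (subP p (FAH p m))‖
        ≤ (p : ℝ)⁻¹ * 1 := by
          apply mul_le_mul h1 h2 (norm_nonneg _) (by positivity)
      _ = (p : ℝ)⁻¹ := mul_one _
  -- the mod-p bound via ℤ_[p]
  have key4 : ‖(coeff m) (Qs ^ p) - t‖ ≤ (p : ℝ)⁻¹ := by
    have hA : ∀ l, l < m → ‖ahc p l‖ ≤ 1 := fun l hl => IH l hl
    set A : ℕ → ℤ_[p] := fun l => if h : l < m then ⟨ahc p l, hA l h⟩ else 0 with hAdef
    set Q' : Polynomial ℤ_[p] := ∑ l ∈ Finset.range m, Polynomial.C (A l) * Polynomial.X ^ l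
      with hQ'def
    have hQ'coeff : ∀ l, Q'.coeff l = if l < m then A l else 0 := by
      intro l
      rw [hQ'def, Polynomial.finset_sum_coeff]
      have hterm : ∀ x ∈ Finset.range m,
          (Polynomial.C (A x) * Polynomial.X ^ x).coeff l
            = if l = x then A x else 0 := by
        intro x _
        rw [Polynomial.coeff_C_mul, Polynomial.coeff_X_pow, mul_ite, mul_one, mul_zero]
      rw [Finset.sum_congr rfl hterm, Finset.sum_ite_eq (Finset.range m) l]
      by_cases h : l < m
      · rw [if_pos (Finset.mem_range.2 h), if_pos h]
      · rw [if_neg (fun hh => h (Finset.mem_range.1 hh)), if_neg h]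
    have hQsPoly : ((Q'.map (PadicInt.Coe.ringHom) : Polynomial ℚ_[p]) : PowerSeries ℚ_[p])
        = Qs := by
      ext l
      rw [Polynomial.coeff_coe, Polynomial.coeff_map, hQ'coeff, hQscoeff]
      by_cases h : l < m
      · rw [if_pos h, if_pos h, hAdef]
        simp only [dif_pos h]
        exact (congrArg PadicInt.Coe.ringHom (dif_pos h)).trans rfl
      · rw [if_neg h, if_neg h, map_zero]
    have hcoeQsp : (coeff m) (Qs ^ p) = PadicInt.Coe.ringHom ((Q' ^ p).coeff m) := by
      rw [← hQsPoly, ← Polynomial.coe_pow, Polynomial.coeff_coe, ← Polynomial.map_pow,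
        Polynomial.coeff_map]
    have hfrobid : ∀ gz : Polynomial (ZMod p), gz.map (frobenius (ZMod p) p) = gz := by
      intro gz
      ext n
      rw [Polynomial.coeff_map, frobenius_def, ZMod.pow_card]
    have hfrob : (Q'.map PadicInt.toZMod) ^ p
        = Polynomial.expand (ZMod p) p (Q'.map PadicInt.toZMod) := by
      rw [← Polynomial.map_frobenius_expand, hfrobid]
    have hZ : PadicInt.toZMod ((Q' ^ p).coeff m)
        = PadicInt.toZMod (if p ∣ m then Q'.coeff (m / p) else 0) := by
      calc PadicInt.toZMod ((Q' ^ p).coeff m)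
          = ((Q' ^ p).map PadicInt.toZMod).coeff m := (Polynomial.coeff_map _ _).symm
        _ = ((Q'.map PadicInt.toZMod) ^ p).coeff m := by rw [Polynomial.map_pow]
        _ = (Polynomial.expand (ZMod p) p (Q'.map PadicInt.toZMod)).coeff m := by rw [hfrob]
        _ = if p ∣ m then (Q'.map PadicInt.toZMod).coeff (m / p) else 0 :=
            Polynomial.coeff_expand (hp_pos p) _ m
        _ = PadicInt.toZMod (if p ∣ m then Q'.coeff (m / p) else 0) := by
            by_cases h : p ∣ m
            · rw [if_pos h, if_pos h, Polynomial.coeff_map]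
            · rw [if_neg h, if_neg h, map_zero]
    set w : ℤ_[p] := (Q' ^ p).coeff m - (if p ∣ m then Q'.coeff (m / p) else 0) with hw
    have hwker : PadicInt.toZMod w = 0 := by rw [hw, map_sub, hZ, sub_self]
    have hwnorm : ‖w‖ ≤ (p : ℝ)⁻¹ := by
      have hmem : w ∈ RingHom.ker (PadicInt.toZMod (p := p)) := hwker
      rw [PadicInt.ker_toZMod, PadicInt.maximalIdeal_eq_span_p,
        Ideal.mem_span_singleton] at hmem
      obtain ⟨y, hy⟩ := hmem
      calc ‖w‖ = ‖(p : ℤ_[p]) * y‖ := by rw [← hy]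
        _ = (p : ℝ)⁻¹ * ‖y‖ := by rw [norm_mul, PadicInt.norm_p]
        _ ≤ (p : ℝ)⁻¹ * 1 :=
            mul_le_mul_of_nonneg_left (PadicInt.norm_le_one y) (by positivity)
        _ = (p : ℝ)⁻¹ := mul_one _
    have hcoe : ((w : ℚ_[p])) = (coeff m) (Qs ^ p) - t := by
      rw [hw, PadicInt.coe_sub, hcoeQsp, ht]
      congr 1
      by_cases h : p ∣ m
      · rw [if_pos h, if_pos h, hQ'coeff, if_pos (Nat.div_lt_self hm (by omega)), hAdef]
        simp only [dif_pos (Nat.div_lt_self hm (by omega : 1 < p))]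
        exact (congrArg Subtype.val (dif_pos (Nat.div_lt_self hm (by omega : 1 < p)))).trans rfl
      · rw [if_neg h, if_neg h]
        rfl
    calc ‖(coeff m) (Qs ^ p) - t‖ = ‖(w : ℚ_[p])‖ := by rw [hcoe]
      _ = ‖w‖ := PadicInt.norm_def.symm
      _ ≤ (p : ℝ)⁻¹ := hwnorm
  -- conclusion
  have heq : (p : ℚ_[p]) * am
      = ((coeff m) (f ^ p) - t) - ((coeff m) (Qs ^ p) - t) := by
    rw [key1]; ring
  have hbound : ‖(p : ℚ_[p]) * am‖ ≤ (p : ℝ)⁻¹ := by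
    rw [heq, sub_eq_add_neg]
    calc ‖((coeff m) (f ^ p) - t) + -((coeff m) (Qs ^ p) - t)‖
        ≤ max ‖(coeff m) (f ^ p) - t‖ ‖-((coeff m) (Qs ^ p) - t)‖ :=
          Padic.nonarchimedean _ _
      _ ≤ (p : ℝ)⁻¹ := by rw [norm_neg]; exact max_le key3 key4
  rw [norm_mul, Padic.norm_p] at hbound
  calc ‖am‖ = (p : ℝ) * ((p : ℝ)⁻¹ * ‖am‖) := by field_simp
    _ ≤ (p : ℝ) * (p : ℝ)⁻¹ := by
        apply mul_le_mul_of_nonneg_left hbound (le_of_lt hppos)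
    _ = 1 := by field_simp


/-- the exponent constant `(2p-1)/(p²(p-1))`. -/
noncomputable def cst : ℝ := (2 * (p : ℝ) - 1) / ((p : ℝ) ^ 2 * ((p : ℝ) - 1))

/-- the coefficient growth bound. -/
noncomputable def CC : ℝ := (p : ℝ) ^ (cst p)

lemma cst_nonneg (hp3 : 3 ≤ p) : 0 ≤ cst p := by
  have h3 : (3 : ℝ) ≤ (p : ℝ) := by exact_mod_cast hp3
  have : (0:ℝ) < (p : ℝ) ^ 2 * ((p : ℝ) - 1) := by nlinarith
  apply div_nonneg (by nlinarith) (le_of_lt this)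

lemma CC_one_le (hp3 : 3 ≤ p) : 1 ≤ CC p := by
  apply Real.one_le_rpow (by exact_mod_cast by omega : (1:ℝ) ≤ (p:ℝ)) (cst_nonneg p hp3)

lemma CC_pos (hp3 : 3 ≤ p) : 0 < CC p := lt_of_lt_of_le one_pos (CC_one_le p hp3)

lemma CC_nonneg : 0 ≤ CC p := Real.rpow_nonneg (Nat.cast_nonneg p) _

lemma CC_pow_nonneg (d : ℕ) : 0 ≤ CC p ^ d := pow_nonneg (CC_nonneg p) d

lemma factorial_val_mul_le (n : ℕ) (hn : 1 ≤ n) :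
    (p - 1) * padicValNat p (n.factorial) ≤ n - 1 := by
  have h := sub_one_mul_padicValNat_factorial (p := p) n
  have hs := digitsum_pos p n (by omega)
  omega

lemma jp2_le (hp3 : 3 ≤ p) (j : ℕ) (hj : 2 ≤ j) : j * p ^ 2 ≤ 2 * p ^ j := by
  induction j with
  | zero => omega
  | succ n ih =>
      rcases Nat.lt_or_ge n 2 with h | h
      · have : n = 1 := by omega
        subst this
        norm_num
      · have h1 := ih h
        have h2 : p ^ 2 ≤ p ^ n := Nat.pow_le_pow_right (by omega) h
        have h3 : 3 * p ^ n ≤ 2 * p ^ (n + 1) := by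
          rw [pow_succ]
          calc 3 * p ^ n ≤ p ^ n * p := by
                have : 3 ≤ p := hp3
                calc 3 * p ^ n = p ^ n * 3 := by ring
                  _ ≤ p ^ n * p := Nat.mul_le_mul_left _ hp3
            _ ≤ 2 * (p ^ n * p) := by omega
        calc (n + 1) * p ^ 2 = n * p ^ 2 + p ^ 2 := by ring
          _ ≤ 2 * p ^ n + p ^ n := by omega
          _ = 3 * p ^ n := by ring
          _ ≤ 2 * p ^ (n + 1) := h3

lemma real_ineq (P J N V Pj : ℝ) (hP : 3 ≤ P) (hJ : 2 ≤ J) (hN : 1 ≤ N) (hV : 0 ≤ V)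
    (h1 : J * P ^ 2 ≤ 2 * Pj) (h2 : P ^ 2 ≤ Pj) (h3 : (P - 1) * V ≤ N - 1) :
    J * N + V ≤ (2 * P - 1) / (P ^ 2 * (P - 1)) * (Pj * N) := by
  rw [div_mul_eq_mul_div, le_div_iff₀ (by nlinarith)]
  nlinarith [mul_le_mul_of_nonneg_right h1 (by nlinarith : (0:ℝ) ≤ N * (P - 1)),
    mul_le_mul_of_nonneg_right h3 (by nlinarith : (0:ℝ) ≤ P ^ 2),
    mul_le_mul_of_nonneg_right h2 (by nlinarith : (0:ℝ) ≤ N)]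

lemma norm_coeff_corr (hp3 : 3 ≤ p) (j : ℕ) (hj : 2 ≤ j) (d : ℕ) :
    ‖(coeff d) (Pser p (-(((p : ℚ_[p]) ^ j)⁻¹)) (p ^ j))‖ ≤ CC p ^ d := by
  have hppos : (0:ℝ) < (p : ℝ) := by exact_mod_cast hp_pos p
  have hp1 : (1:ℝ) < (p : ℝ) := by exact_mod_cast (Fact.out : p.Prime).one_lt
  rw [coeff_Pser]
  by_cases h : p ^ j ∣ d
  · obtain ⟨n, rfl⟩ := h
    have hdvd : p ^ j ∣ p ^ j * n := ⟨n, rfl⟩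
    rw [if_pos hdvd, Nat.mul_div_cancel_left _ (pow_pos (hp_pos p) j)]
    rcases Nat.eq_zero_or_pos n with rfl | hn
    · simp
    -- n ≥ 1
    have hfac : ((n.factorial : ℚ_[p])) ≠ 0 := Nat.cast_ne_zero.2 n.factorial_ne_zero
    set v := padicValNat p (n.factorial) with hv
    have hnorm : ‖(-(((p : ℚ_[p]) ^ j)⁻¹)) ^ n / (n.factorial : ℚ_[p])‖
        = (p : ℝ) ^ ((j * n : ℕ) + (v : ℤ)) := by
      rw [norm_div, norm_pow, norm_neg, norm_inv, norm_pow, Padic.norm_p,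
        Padic.norm_eq_zpow_neg_valuation hfac, Padic.valuation_natCast, ← hv]
      rw [← zpow_natCast ((p:ℝ)⁻¹) j]
      rw [inv_zpow, ← zpow_neg, ← zpow_natCast ((p:ℝ) ^ (-(j:ℤ)))⁻¹ n, inv_zpow, ← zpow_neg,
        ← zpow_mul, ← zpow_sub₀ (ne_of_gt hppos)]
      congr 1
      push_cast
      ring
    rw [hnorm]
    -- convert to rpow and compare exponents
    have hCC : (CC p : ℝ) ^ (p ^ j * n) = (p : ℝ) ^ (cst p * ((p ^ j * n : ℕ) : ℝ)) := by
      rw [CC, ← Real.rpow_natCast ((p:ℝ) ^ cst p) (p ^ j * n), ← Real.rpow_mul (le_of_lt hppos)]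
    rw [hCC, ← Real.rpow_intCast (p : ℝ) ((j * n : ℕ) + (v : ℤ)),
      Real.rpow_le_rpow_left_iff hp1]
    -- the real inequality
    have hvle : ((p : ℝ) - 1) * (v : ℝ) ≤ (n : ℝ) - 1 := by
      have h := factorial_val_mul_le p n hn
      have hp2 : 2 ≤ p := (Fact.out : p.Prime).two_le
      have hc : (((p - 1) * v : ℕ) : ℝ) ≤ ((n - 1 : ℕ) : ℝ) := by exact_mod_cast h
      rw [Nat.cast_mul, Nat.cast_sub (by omega : 1 ≤ p), Nat.cast_sub (by omega : 1 ≤ n)]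
        at hc
      simpa using hc
    have h1 : (j : ℝ) * (p : ℝ) ^ 2 ≤ 2 * ((p ^ j : ℕ) : ℝ) := by
      exact_mod_cast jp2_le p hp3 j hj
    have h2 : ((p : ℝ)) ^ 2 ≤ ((p ^ j : ℕ) : ℝ) := by
      exact_mod_cast Nat.pow_le_pow_right (hp_pos p) hj
    have := real_ineq (p : ℝ) (j : ℝ) (n : ℝ) (v : ℝ) ((p ^ j : ℕ) : ℝ)
      (by exact_mod_cast hp3) (by exact_mod_cast hj) (by exact_mod_cast hn)
      (by positivity) h1 h2 hvle
    calc (((j * n : ℕ) + (v : ℤ) : ℤ) : ℝ) = (j : ℝ) * (n : ℝ) + (v : ℝ) := by push_cast; ring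
      _ ≤ (2 * (p:ℝ) - 1) / ((p:ℝ) ^ 2 * ((p:ℝ) - 1)) * (((p ^ j : ℕ) : ℝ) * (n : ℝ)) := this
      _ = cst p * (((p ^ j * n : ℕ) : ℕ) : ℝ) := by rw [cst]; push_cast; ring
  · rw [if_neg h, norm_zero]
    exact CC_pow_nonneg p _

lemma Bnd_mul (hp3 : 3 ≤ p) (f g : PowerSeries ℚ_[p])
    (hf : ∀ d, ‖(coeff d) f‖ ≤ CC p ^ d) (hg : ∀ d, ‖(coeff d) g‖ ≤ CC p ^ d) :
    ∀ d, ‖(coeff d) (f * g)‖ ≤ CC p ^ d := by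
  intro d
  rw [PowerSeries.coeff_mul]
  apply IsUltrametricDist.norm_sum_le_of_forall_le_of_nonneg (CC_pow_nonneg p d)
  rintro ⟨a, b⟩ hab
  rw [Finset.HasAntidiagonal.mem_antidiagonal] at hab
  rw [norm_mul, ← hab, pow_add]
  exact mul_le_mul (hf a) (hg b) (norm_nonneg _) (CC_pow_nonneg p a)

lemma Bnd_one (hp3 : 3 ≤ p) : ∀ d, ‖(coeff d) (1 : PowerSeries ℚ_[p])‖ ≤ CC p ^ d := by
  intro d
  rw [PowerSeries.coeff_one]
  by_cases h : d = 0
  · subst h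
    rw [if_pos rfl, pow_zero, norm_one]
  · rw [if_neg h, norm_zero]; exact CC_pow_nonneg p _

/-- the series `G = exp(t + t^p/p)`, whose coefficients are `g_i`. -/
noncomputable def Gser : PowerSeries ℚ_[p] := Pser p 1 1 * Pser p ((p : ℚ_[p]))⁻¹ p

lemma Gser_eq (i : ℕ) :
    Gser p = FAH p (i + 1) *
      ∏ j ∈ Finset.Ico 2 (i + 2), Pser p (-(((p : ℚ_[p]) ^ j)⁻¹)) (p ^ j) := by
  have h1 : FAH p (i + 1)
      = Gser p * ∏ j ∈ Finset.Ico 2 (i + 2), Pser p (((p : ℚ_[p]) ^ j)⁻¹) (p ^ j) := by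
    rw [FAH, Finset.range_eq_Ico,
      ← Finset.prod_Ico_consecutive _ (by omega : 0 ≤ 2) (by omega : 2 ≤ i + 1 + 1)]
    congr 1
    rw [← Finset.range_eq_Ico]
    rw [Finset.prod_range_succ, Finset.prod_range_one, Gser]
    norm_num
  rw [h1, mul_assoc, ← Finset.prod_mul_distrib]
  have h2 : ∀ j ∈ Finset.Ico 2 (i + 2),
      Pser p (((p : ℚ_[p]) ^ j)⁻¹) (p ^ j) * Pser p (-(((p : ℚ_[p]) ^ j)⁻¹)) (p ^ j)
        = 1 := by
    intro j _
    rw [Pser_mul_Pser p _ _ _ (pow_pos (hp_pos p) j), add_neg_cancel,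
      Pser_zero p _ (pow_pos (hp_pos p) j)]
  rw [Finset.prod_congr rfl h2, Finset.prod_const_one, mul_one]

lemma norm_coeff_Gser (hp3 : 3 ≤ p) (i : ℕ) : ‖(coeff i) (Gser p)‖ ≤ CC p ^ i := by
  rw [Gser_eq p i, PowerSeries.coeff_mul]
  apply IsUltrametricDist.norm_sum_le_of_forall_le_of_nonneg (CC_pow_nonneg p i)
  rintro ⟨a, b⟩ hab
  rw [Finset.HasAntidiagonal.mem_antidiagonal] at hab
  have ha : ‖(coeff a) (FAH p (i + 1))‖ ≤ CC p ^ a := by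
    rw [coeff_FAH_eq_ahc p a (i + 1)
      (by calc a ≤ i := by omega
            _ < p ^ (i + 1) := Nat.lt_pow_self (n := i) (Fact.out : p.Prime).one_lt |>.trans_le
                (Nat.pow_le_pow_right (hp_pos p) (by omega))
            _ ≤ p ^ (i + 2) := Nat.pow_le_pow_right (hp_pos p) (by omega))]
    calc ‖ahc p a‖ ≤ 1 := ahc_norm_le_one p a
      _ ≤ CC p ^ a := one_le_pow₀ (CC_one_le p hp3)
  have hb : ∀ d, ‖(coeff d)
      (∏ j ∈ Finset.Ico 2 (i + 2), Pser p (-(((p : ℚ_[p]) ^ j)⁻¹)) (p ^ j))‖ ≤ CC p ^ d := by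
    apply Finset.prod_induction _ (fun h => ∀ d, ‖(coeff d) h‖ ≤ CC p ^ d)
      (Bnd_mul p hp3) (Bnd_one p hp3)
    intro j hj
    exact norm_coeff_corr p hp3 j (Finset.mem_Ico.1 hj).1
  rw [norm_mul]
  refine le_trans (mul_le_mul ha (hb b) (norm_nonneg _) (CC_pow_nonneg p a)) ?_
  rw [← pow_add, hab]


lemma coeff_Gser_eq (i : ℕ) :
    (coeff i) (Gser p) = ∑ k ∈ Finset.range (i + 1),
      if p * k ≤ i then
        ((p : ℚ_[p]) ^ k)⁻¹ /
          (((i - p * k).factorial : ℚ_[p]) * (k.factorial : ℚ_[p]))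
      else 0 := by
  rw [Gser, PowerSeries.coeff_mul, Finset.Nat.sum_antidiagonal_eq_sum_range_succ_mk]
  have hterm : ∀ t ∈ Finset.range (i + 1),
      (coeff t) (Pser p 1 1) * (coeff (i - t)) (Pser p ((p : ℚ_[p]))⁻¹ p)
        = if p ∣ (i - t) then
            ((p : ℚ_[p]) ^ ((i - t) / p))⁻¹ /
              ((t.factorial : ℚ_[p]) * ((((i - t) / p).factorial : ℕ) : ℚ_[p]))
          else 0 := by
    intro t _
    rw [coeff_Pser, coeff_Pser, if_pos (one_dvd t), Nat.div_one, one_pow]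
    by_cases h : p ∣ (i - t)
    · rw [if_pos h, if_pos h, inv_pow]
      rw [div_mul_div_comm, one_mul]
    · rw [if_neg h, if_neg h, mul_zero]
  rw [Finset.sum_congr rfl hterm, ← Finset.sum_filter, ← Finset.sum_filter]
  refine Finset.sum_nbij' (fun t => (i - t) / p) (fun k => i - p * k) ?_ ?_ ?_ ?_ ?_
  · intro t ht
    rw [Finset.mem_filter, Finset.mem_range] at ht
    obtain ⟨ht1, u, hu⟩ := ht
    rw [Finset.mem_filter, Finset.mem_range, hu, Nat.mul_div_cancel_left _ (hp_pos p)]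
    have hp1 : 1 ≤ p := hp_pos p
    have hup : u ≤ p * u := Nat.le_mul_of_pos_left u (hp_pos p)
    omega
  · intro k hk
    rw [Finset.mem_filter, Finset.mem_range] at hk
    obtain ⟨hk1, hk2⟩ := hk
    rw [Finset.mem_filter, Finset.mem_range]
    exact ⟨by omega, ⟨k, by omega⟩⟩
  · intro t ht
    rw [Finset.mem_filter, Finset.mem_range] at ht
    obtain ⟨ht1, u, hu⟩ := ht
    rw [hu, Nat.mul_div_cancel_left _ (hp_pos p)]
    have hp1 : 1 ≤ p := hp_pos p
    have hup : u ≤ p * u := Nat.le_mul_of_pos_left u (hp_pos p)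
    omega
  · intro k hk
    rw [Finset.mem_filter, Finset.mem_range] at hk
    obtain ⟨hk1, hk2⟩ := hk
    rw [show i - (i - p * k) = p * k by omega, Nat.mul_div_cancel_left _ (hp_pos p)]
  · intro t ht
    rw [Finset.mem_filter, Finset.mem_range] at ht
    obtain ⟨ht1, u, hu⟩ := ht
    rw [hu, Nat.mul_div_cancel_left _ (hp_pos p), show i - p * u = t by omega]

end DworkProof


/-- `‖b_i‖ ≤ p^{-i(p-1)/p²}` for every coefficient of the Dwork series. -/
theorem stmt_2 (p : ℕ) [Fact p.Prime] (hp2 : p ≠ 2)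
    {K : Type*} [NormedField K] [IsUltrametricDist K] [CompleteSpace K] [IsAlgClosed K]
    (ι : ℚ_[p] →+* K) (hι : ∀ x, ‖ι x‖ = ‖x‖)
    (π : K) (hπ : π ^ (p - 1) = -(p : K))
    (i : ℕ) :
    ‖AHG.dworkB p π i‖ ≤ (p : ℝ) ^ (-((i : ℝ) * ((p : ℝ) - 1)) / (p : ℝ) ^ 2) := by

  classical
  have hp2' : 2 ≤ p := (Fact.out : p.Prime).two_le
  have hp3 : 3 ≤ p := by
    rcases Nat.lt_or_ge p 3 with h | h
    · exfalso; interval_cases p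
      · exact hp2 rfl
    · exact h
  haveI : CharZero K := (RingHom.charZero_iff ι.injective).mp inferInstance
  have hP3 : (3 : ℝ) ≤ (p : ℝ) := by exact_mod_cast hp3
  have hP1 : (1 : ℝ) < (p : ℝ) := by linarith
  have hP0 : (0 : ℝ) < (p : ℝ) := by linarith
  have hpK : ((p : K)) ≠ 0 := Nat.cast_ne_zero.2 (by omega)
  -- the key algebraic identity
  have hkey : AHG.dworkB p π i
      = π ^ i * ι ((PowerSeries.coeff i) (DworkProof.Gser p)) := by
    rw [AHG.dworkB, DworkProof.coeff_Gser_eq, map_sum, Finset.mul_sum]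
    refine Finset.sum_congr rfl fun k _ => ?_
    rw [apply_ite ι, map_zero, mul_ite, mul_zero]
    by_cases hc : p * k ≤ i
    · rw [if_pos hc, if_pos hc, map_div₀, map_inv₀, map_pow, map_natCast ι, map_mul,
        map_natCast ι, map_natCast ι]
      have hπk : (-1 : K) ^ k * π ^ (i - p * k + k) * (p : K) ^ k = π ^ i := by
        have h1 : (-1 : K) ^ k * (p : K) ^ k = (π ^ (p - 1)) ^ k := by
          rw [hπ, neg_pow ((p : K))]
        calc (-1 : K) ^ k * π ^ (i - p * k + k) * (p : K) ^ k
            = π ^ (i - p * k + k) * ((-1 : K) ^ k * (p : K) ^ k) := by ring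
          _ = π ^ (i - p * k + k) * (π ^ (p - 1)) ^ k := by rw [h1]
          _ = π ^ ((i - p * k + k) + (p - 1) * k) := by rw [← pow_mul, ← pow_add]
          _ = π ^ i := by
              congr 1
              have h2 : (p - 1) * k = p * k - k := by rw [Nat.sub_mul, one_mul]
              have h3 : k ≤ p * k := Nat.le_mul_of_pos_left k (by omega)
              omega
      have hnum : π ^ i * ((p : K) ^ k)⁻¹ = (-1 : K) ^ k * π ^ (i - p * k + k) := by
        rw [← hπk, mul_inv_cancel_right₀ (pow_ne_zero k hpK)]
      rw [mul_div_assoc']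
      rw [show π ^ i * ((p : K) ^ k)⁻¹ = (-1 : K) ^ k * π ^ (i - p * k + k) from hnum]
    · rw [if_neg hc, if_neg hc]
  rw [hkey, norm_mul, norm_pow, hι]
  -- the norm of π
  have hnormpi_pow : ‖π‖ ^ (p - 1) = ((p : ℝ))⁻¹ := by
    rw [← norm_pow, hπ, norm_neg, show ((p : K)) = ι ((p : ℚ_[p])) from (map_natCast ι p).symm,
      hι, Padic.norm_p]
  have hn1 : ((p - 1 : ℕ) : ℝ) = (p : ℝ) - 1 := by
    rw [Nat.cast_sub (by omega)]; norm_num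
  have hnormpi : ‖π‖ = (p : ℝ) ^ (-(1 / ((p : ℝ) - 1))) := by
    have h1 : ‖π‖ = (‖π‖ ^ (p - 1) : ℝ) ^ ((1 : ℝ) / (((p - 1 : ℕ)) : ℝ)) := by
      rw [← Real.rpow_natCast ‖π‖ (p - 1), ← Real.rpow_mul (norm_nonneg π), mul_one_div,
        div_self (by rw [hn1]; linarith), Real.rpow_one]
    rw [h1, hnormpi_pow, hn1, Real.inv_rpow (le_of_lt hP0), ← Real.rpow_neg (le_of_lt hP0)]
  -- power of the norm of π
  have hnormpi_i : ‖π‖ ^ i = (p : ℝ) ^ (-(1 / ((p : ℝ) - 1)) * (i : ℝ)) := by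
    rw [hnormpi, ← Real.rpow_natCast ((p : ℝ) ^ (-(1 / ((p : ℝ) - 1)))) i,
      ← Real.rpow_mul (le_of_lt hP0)]
  -- bound the Gser coefficient
  have hG : ‖(PowerSeries.coeff i) (DworkProof.Gser p)‖
      ≤ (p : ℝ) ^ (DworkProof.cst p * (i : ℝ)) := by
    have h1 := DworkProof.norm_coeff_Gser p hp3 i
    have h2 : DworkProof.CC p ^ i = (p : ℝ) ^ (DworkProof.cst p * (i : ℝ)) := by
      rw [DworkProof.CC, ← Real.rpow_natCast ((p : ℝ) ^ DworkProof.cst p) i,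
        ← Real.rpow_mul (le_of_lt hP0)]
    rw [← h2]
    exact h1
  calc ‖π‖ ^ i * ‖(PowerSeries.coeff i) (DworkProof.Gser p)‖
      ≤ ‖π‖ ^ i * (p : ℝ) ^ (DworkProof.cst p * (i : ℝ)) :=
        mul_le_mul_of_nonneg_left hG (pow_nonneg (norm_nonneg π) i)
    _ = (p : ℝ) ^ (-(1 / ((p : ℝ) - 1)) * (i : ℝ) + DworkProof.cst p * (i : ℝ)) := by
        rw [hnormpi_i, ← Real.rpow_add hP0]
    _ = (p : ℝ) ^ (-((i : ℝ) * ((p : ℝ) - 1)) / (p : ℝ) ^ 2) := by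
        congr 1
        rw [DworkProof.cst]
        have hne1 : ((p : ℝ) - 1) ≠ 0 := by linarith
        have hne0 : ((p : ℝ)) ≠ 0 := by linarith
        field_simp
        ring
end

section
/- For every integer i with 0 ≤ i ≤ p−1 one has b_i = π^i/i!, and for every integer i with 0 ≤ i ≤ 2p−1 one has ‖b_i‖ ≤ ‖π‖^i = p^{−i/(p−1)}. -/
open scoped BigOperators Classical

open scoped BigOperators Classical



private lemma auxA (p : ℕ) [Fact p.Prime] (s : Finset ℕ) (f : ℕ → ZMod p)
    (hinj : Set.InjOn f s) (hcard : s.card = p - 1)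
    (h0 : ∀ m ∈ s, f m ≠ 0) :
    ∏ m ∈ s, f m = ∏ x ∈ Finset.univ.erase (0 : ZMod p), x := by
  classical
  have himg : s.image f = Finset.univ.erase (0 : ZMod p) := by
    apply Finset.eq_of_subset_of_card_le
    · intro x hx
      obtain ⟨m, hm, rfl⟩ := Finset.mem_image.mp hx
      exact Finset.mem_erase.mpr ⟨h0 m hm, Finset.mem_univ _⟩
    · rw [Finset.card_erase_of_mem (Finset.mem_univ _), Finset.card_univ, ZMod.card,
        Finset.card_image_of_injOn hinj, hcard]
  rw [← himg, Finset.prod_image (fun x hx y hy h => hinj hx hy h)]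

private lemma auxWilson (p : ℕ) [Fact p.Prime] :
    ∏ x ∈ Finset.univ.erase (0 : ZMod p), x = -1 := by
  have hp := (Fact.out : p.Prime)
  have h := auxA p (Finset.range (p - 1)) (fun m => ((m + 1 : ℕ) : ZMod p))
    (fun m₁ hm₁ m₂ hm₂ h => by
      simp only [Finset.coe_range, Set.mem_Iio] at hm₁ hm₂
      have e1 : ((m₁ + 1 : ℕ) : ZMod p).val = m₁ + 1 := ZMod.val_cast_of_lt (by omega)
      have e2 : ((m₂ + 1 : ℕ) : ZMod p).val = m₂ + 1 := ZMod.val_cast_of_lt (by omega)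
      have := congrArg ZMod.val h
      rw [e1, e2] at this
      omega)
    (Finset.card_range _)
    (fun m hm => by
      simp only [Finset.mem_range] at hm
      rw [Ne, ZMod.natCast_eq_zero_iff]
      intro hdvd
      have := Nat.le_of_dvd (by omega) hdvd
      omega)
  rw [← h, ← Nat.cast_prod, Finset.prod_range_add_one_eq_factorial, ZMod.wilsons_lemma]

private lemma auxKey (p : ℕ) [Fact p.Prime] (j : ℕ) (hj : j < p) :
    ((∏ m ∈ (Finset.range p).erase (p - 1 - j), (j + m + 1) : ℕ) : ZMod p) = -1 := by
  have hp := (Fact.out : p.Prime)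
  rw [Nat.cast_prod]
  rw [auxA p _ (fun m => ((j + m + 1 : ℕ) : ZMod p))
    (fun m₁ hm₁ m₂ hm₂ h => by
      have hm₁' : m₁ < p := Finset.mem_range.mp (Finset.mem_of_mem_erase hm₁)
      have hm₂' : m₂ < p := Finset.mem_range.mp (Finset.mem_of_mem_erase hm₂)
      have e1 : ((j + m₁ + 1 : ℕ) : ZMod p) = ((j + 1 : ℕ) : ZMod p) + ((m₁ : ℕ) : ZMod p) := by
        push_cast; ring
      have e2 : ((j + m₂ + 1 : ℕ) : ZMod p) = ((j + 1 : ℕ) : ZMod p) + ((m₂ : ℕ) : ZMod p) := by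
        push_cast; ring
      have hh : ((j + m₁ + 1 : ℕ) : ZMod p) = ((j + m₂ + 1 : ℕ) : ZMod p) := h
      rw [e1, e2] at hh
      have h' : ((m₁ : ℕ) : ZMod p) = ((m₂ : ℕ) : ZMod p) := add_left_cancel hh
      have v1 : ((m₁ : ℕ) : ZMod p).val = m₁ := ZMod.val_cast_of_lt hm₁'
      have v2 : ((m₂ : ℕ) : ZMod p).val = m₂ := ZMod.val_cast_of_lt hm₂'
      rw [← v1, ← v2, h'])
    (by
      rw [Finset.card_erase_of_mem (Finset.mem_range.mpr (by omega)), Finset.card_range])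
    (fun m hm => by
      have hmp : m < p := Finset.mem_range.mp (Finset.mem_of_mem_erase hm)
      have hmne : m ≠ p - 1 - j := (Finset.mem_erase.mp hm).1
      rw [Ne, ZMod.natCast_eq_zero_iff]
      intro hdvd
      have hle : p ≤ j + m + 1 := Nat.le_of_dvd (by omega) hdvd
      have h2 : p ∣ (j + m + 1 - p) := Nat.dvd_sub hdvd dvd_rfl
      have h3 : j + m + 1 - p = 0 := by
        by_contra h0
        have := Nat.le_of_dvd (Nat.pos_of_ne_zero h0) h2
        omega
      omega)]
  exact auxWilson p

private lemma auxFactSplit (j : ℕ) : ∀ m : ℕ, (j + m).factorial = j.factorial * ∏ r ∈ Finset.range m, (j + r + 1)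
  | 0 => by simp
  | (m + 1) => by
    rw [Finset.prod_range_succ, show j + (m + 1) = (j + m) + 1 by omega, Nat.factorial_succ,
      auxFactSplit j m]
    ring



/-- `b_i = π^i/i!` for `0 ≤ i ≤ p-1`, and `‖b_i‖ ≤ ‖π‖^i = p^{-i/(p-1)}`
for `0 ≤ i ≤ 2p-1`. -/
theorem stmt_3 (p : ℕ) [Fact p.Prime] (hp2 : p ≠ 2)
    {K : Type*} [NormedField K] [IsUltrametricDist K] [CompleteSpace K] [IsAlgClosed K]
    (ι : ℚ_[p] →+* K) (hι : ∀ x, ‖ι x‖ = ‖x‖)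
    (π : K) (hπ : π ^ (p - 1) = -(p : K)) :
    (∀ i : ℕ, i ≤ p - 1 → AHG.dworkB p π i = π ^ i / (Nat.factorial i : K)) ∧
    ∀ i : ℕ, i ≤ 2 * p - 1 →
      ‖AHG.dworkB p π i‖ ≤ ‖π‖ ^ i ∧
      ‖π‖ ^ i = (p : ℝ) ^ (-(i : ℝ) / ((p : ℝ) - 1)) := by
  have hp := (Fact.out : p.Prime)
  have hp3 : 3 ≤ p := by
    have := hp.two_le
    omega
  -- injectivity of ι and CharZero K
  have hinj : Function.Injective ι := by
    intro x y hxy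
    have h := hι (x - y)
    rw [map_sub, hxy, sub_self, norm_zero] at h
    exact sub_eq_zero.mp (norm_eq_zero.mp h.symm)
  haveI : CharZero K := ⟨fun a b hab => by
    have h : ι ((a : ℕ) : ℚ_[p]) = ι ((b : ℕ) : ℚ_[p]) := by
      rw [map_natCast, map_natCast]; exact_mod_cast hab
    exact_mod_cast hinj h⟩
  -- norms of nat casts
  have hnormK : ∀ n : ℕ, ‖(n : K)‖ = ‖(n : ℚ_[p])‖ := fun n => by
    rw [← map_natCast ι, hι]
  have hfac_norm : ∀ m : ℕ, ¬ p ∣ m → ‖(m : K)‖ = 1 := by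
    intro m hm
    rw [hnormK]
    have h1 : ‖((m : ℤ) : ℚ_[p])‖ ≤ 1 := Padic.norm_int_le_one _
    have h2 : ¬ ‖((m : ℤ) : ℚ_[p])‖ < 1 := by
      rw [Padic.norm_intCast_lt_one_iff]
      exact_mod_cast hm
    push_cast at h1 h2
    linarith
  -- norm of π
  have hppos : (0:ℝ) < p := by positivity
  have hπnorm : ‖π‖ ^ (p - 1) = (p : ℝ)⁻¹ := by
    rw [← norm_pow, hπ, norm_neg, hnormK, Padic.norm_p]
  have hq : ((p : ℝ) - 1) = ((p - 1 : ℕ) : ℝ) := by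
    rw [Nat.cast_sub (by omega : 1 ≤ p), Nat.cast_one]
  have hd : ((p : ℝ) - 1) ≠ 0 := by
    have : (3 : ℝ) ≤ (p : ℝ) := by exact_mod_cast hp3
    linarith
  have hπval : ‖π‖ = (p : ℝ) ^ (-(1 : ℝ) / ((p : ℝ) - 1)) := by
    have e1 : ‖π‖ ^ ((p - 1 : ℕ) : ℝ) = (p : ℝ)⁻¹ := by
      rw [Real.rpow_natCast, hπnorm]
    have e2 : ‖π‖ = ((p : ℝ)⁻¹) ^ (((p : ℝ) - 1)⁻¹) := by
      rw [← e1, ← Real.rpow_mul (norm_nonneg π), ← hq, mul_inv_cancel₀ hd, Real.rpow_one]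
    rw [e2, ← Real.rpow_neg_one (p : ℝ), ← Real.rpow_mul hppos.le]
    ring_nf
  have hπpow : ∀ i : ℕ, ‖π‖ ^ i = (p : ℝ) ^ (-(i : ℝ) / ((p : ℝ) - 1)) := by
    intro i
    rw [hπval, ← Real.rpow_natCast ((p : ℝ) ^ (-(1:ℝ) / ((p:ℝ) - 1))) i,
      ← Real.rpow_mul hppos.le]
    congr 1
    ring
  -- Part 1
  have part1 : ∀ i : ℕ, i ≤ p - 1 → AHG.dworkB p π i = π ^ i / (Nat.factorial i : K) := by
    intro i hi
    unfold AHG.dworkB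
    rw [Finset.sum_eq_single 0]
    · simp
    · intro k hk hk0
      rw [if_neg]
      intro hle
      have : p ≤ p * k := Nat.le_mul_of_pos_right p (Nat.pos_of_ne_zero hk0)
      omega
    · intro h
      exact absurd (Finset.mem_range.mpr (by omega)) h
  refine ⟨part1, fun i hi => ?_⟩
  refine ⟨?_, hπpow i⟩
  by_cases hip : i ≤ p - 1
  · -- small case
    rw [part1 i hip, norm_div, norm_pow, hfac_norm _ (by
      rw [hp.dvd_factorial]; omega)]
    simp
  · -- large case: p ≤ i ≤ 2p - 1
    have hpi : p ≤ i := by omega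
    set j := i - p with hjdef
    have hij : i = j + p := by omega
    have hjp : j < p := by omega
    set E := ∏ m ∈ (Finset.range p).erase (p - 1 - j), (j + m + 1) with hEdef
    have hPE : ∏ m ∈ Finset.range p, (j + m + 1) = p * E := by
      rw [← Finset.mul_prod_erase _ _ (Finset.mem_range.mpr (show p - 1 - j < p by omega))]
      congr 1
      omega
    have hfact : Nat.factorial i = Nat.factorial j * (p * E) := by
      rw [hij, auxFactSplit j p, hPE]
    have hE_cast : ((E : ℕ) : ZMod p) = -1 := auxKey p j hjp
    have hdvd : p ∣ E + 1 := by
      have h0 : ((E + 1 : ℕ) : ZMod p) = 0 := by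
        push_cast [hE_cast]
        ring
      exact (ZMod.natCast_eq_zero_iff _ _).mp h0
    have hEnd : ¬ p ∣ E := by
      intro h
      have h1 : p ∣ (E + 1) - E := Nat.dvd_sub hdvd h
      have h2 : (E + 1) - E = 1 := by omega
      rw [h2] at h1
      have := Nat.le_of_dvd one_pos h1
      omega
    have hjnd : ¬ p ∣ Nat.factorial j := by
      rw [hp.dvd_factorial]
      omega
    have hEne : (E : K) ≠ 0 := by
      have hE0 : E ≠ 0 := by
        intro h
        exact hEnd (by rw [h]; exact dvd_zero p)
      exact_mod_cast hE0
    have hjne : ((Nat.factorial j : ℕ) : K) ≠ 0 := by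
      exact_mod_cast Nat.factorial_ne_zero j
    have hpne : ((p : ℕ) : K) ≠ 0 := by
      exact_mod_cast hp.ne_zero
    -- compute dworkB as two terms
    have hval : AHG.dworkB p π i =
        π ^ i / ((Nat.factorial i : K) * 1) +
          ((-1 : K) * π ^ (i - p + 1)) / ((Nat.factorial (i - p) : K) * (Nat.factorial 1 : K)) := by
      unfold AHG.dworkB
      rw [← Finset.sum_subset (Finset.range_subset_range.mpr (show 2 ≤ i + 1 by omega))
        (fun k hk hk2 => by
          rw [if_neg]
          intro hle
          have hk2' : 2 ≤ k := by
            simp only [Finset.mem_range] at hk2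
            omega
          have : p * 2 ≤ p * k := Nat.mul_le_mul_left p hk2'
          omega)]
      rw [Finset.sum_range_succ, Finset.sum_range_one]
      rw [if_pos (by omega), if_pos (by omega)]
      norm_num
    have halg : AHG.dworkB p π i =
        -(π ^ (j + 1) * ((E : K) + 1) / ((Nat.factorial j : K) * (E : K))) := by
      rw [hval]
      have hcast : (Nat.factorial i : K) = (Nat.factorial j : K) * ((p : K) * (E : K)) := by
        rw [hfact]
        push_cast
        ring
      have hπi : π ^ i = π ^ (j + 1) * π ^ (p - 1) := by
        rw [← pow_add]
        congr 1
        omega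
      rw [hcast, hπi, hπ, ← hjdef]
      have h1f : (Nat.factorial 1 : K) = 1 := by norm_num [Nat.factorial]
      rw [h1f]
      field_simp
      ring
    have hE1 : ‖(E : K) + 1‖ ≤ (p : ℝ)⁻¹ := by
      have hcst : ((E : K) + 1) = ((E + 1 : ℕ) : K) := by push_cast; ring
      rw [hcst, hnormK]
      obtain ⟨c, hc⟩ := hdvd
      rw [hc]
      push_cast
      rw [norm_mul, Padic.norm_p]
      have hcle : ‖((c : ℕ) : ℚ_[p])‖ ≤ 1 := by
        have := Padic.norm_int_le_one (p := p) (c : ℤ)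
        push_cast at this
        exact this
      calc (p : ℝ)⁻¹ * ‖((c : ℕ) : ℚ_[p])‖ ≤ (p : ℝ)⁻¹ * 1 := by
            apply mul_le_mul_of_nonneg_left hcle
            positivity
        _ = (p : ℝ)⁻¹ := mul_one _
    rw [halg, norm_neg, norm_div, norm_mul, norm_mul, norm_pow,
      hfac_norm _ hjnd, hfac_norm _ hEnd, mul_one, div_one]
    have hle1 : ‖π‖ ^ (j + 1) * ‖(E : K) + 1‖ ≤ ‖π‖ ^ (j + 1) * (p : ℝ)⁻¹ :=
      mul_le_mul_of_nonneg_left hE1 (by positivity)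
    have heq : ‖π‖ ^ (j + 1) * (p : ℝ)⁻¹ = ‖π‖ ^ i := by
      rw [← hπnorm, ← pow_add]
      congr 1
      omega
    linarith
end

section
/- Every coefficient of the polynomial p^{−1}·B_{(p−1)â_0}(1, y_1,…,y_N) is a rational number lying in ℤ_p, and modulo p it is congruent to the corresponding coefficient of the truncated polynomial Φ_1; explicitly, p^{−1}·B_{(p−1)â_0}(1, y_1,…,y_N) = −Σ_V y_1^{v_1}⋯y_N^{v_N} / ((p−1−v_1−⋯−v_N)!·v_1!⋯v_N!), the sum over (v_0,v_1,…,v_N) ∈ (ℤ_{≥0})^{N+1} with Σ_{i=0}^N v_i â_i = (p−1)â_0, and this polynomial is congruent to Φ_1 coefficientwise modulo p. -/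
open scoped BigOperators Classical

open scoped BigOperators Classical



private lemma wilson_aux (p : ℕ) [Fact p.Prime] :
    ∀ m, m ≤ p - 1 → (((p-1).factorial : ZMod p) =
      (-1)^m * (m.factorial : ZMod p) * ((p-1-m).factorial : ZMod p)) := by
  intro m
  induction m with
  | zero => intro _; simp
  | succ k ih =>
    intro hk
    have hk' : k ≤ p - 1 := by omega
    rw [ih hk']
    have h1 : (p - 1 - k) = (p - 1 - (k+1)) + 1 := by omega
    have h2 : ((p - 1 - (k+1) + 1 : ℕ) : ZMod p) + ((k+1 : ℕ) : ZMod p) = 0 := by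
      have h3 : ((p - 1 - (k+1) + 1) + (k+1) : ℕ) = p := by omega
      have h4 := congrArg (Nat.cast : ℕ → ZMod p) h3
      push_cast at h4
      rw [ZMod.natCast_self] at h4
      push_cast
      linear_combination h4
    rw [h1, Nat.factorial_succ, Nat.factorial_succ]
    push_cast at h2 ⊢
    linear_combination ((-1:ZMod p)^k * (k.factorial : ZMod p) *
      ((p-1-(k+1)).factorial : ZMod p)) * h2

private lemma key_dvd (p : ℕ) [Fact p.Prime] (hp2 : p ≠ 2) {m s : ℕ} (h : m + s = p - 1) :
    (p : ℤ) ∣ 1 + (-1)^s * ((s.factorial * m.factorial : ℕ) : ℤ) := by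
  have hp : p.Prime := Fact.out
  have hw := ZMod.wilsons_lemma (p := p)
  have ha := wilson_aux p m (by omega)
  have hs : p - 1 - m = s := by omega
  rw [hs, hw] at ha
  rw [← ZMod.intCast_zmod_eq_zero_iff_dvd]
  push_cast
  have hodd : Odd p := hp.odd_of_ne_two hp2
  have hsm : s + m + 1 = p := by have := hp.two_le; omega
  have hpow : ((-1:ZMod p))^(s+m+1) = -1 := by rw [hsm, hodd.neg_one_pow]
  have hexp : ((-1:ZMod p))^(s+m+1) = (-1)^s * (-1)^m * (-1) := by ring
  rw [hexp] at hpow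
  have hsq : ((-1:ZMod p))^m * (-1)^m = 1 := by
    rw [← pow_add]; exact Even.neg_one_pow ⟨m, rfl⟩
  linear_combination (-(-1:ZMod p)^s * (-1)^m) * ha + hpow +
    (-(-1:ZMod p)^s * ((s.factorial : ZMod p) * (m.factorial : ZMod p))) * hsq

private lemma dworkB_of_lt (p : ℕ) {K : Type*} [Field K] (π : K) {m : ℕ} (hm : m < p) :
    AHG.dworkB p π m = π ^ m / (m.factorial : K) := by
  unfold AHG.dworkB
  rw [Finset.sum_eq_single 0]
  · simp
  · intro k _ hk0
    rw [if_neg]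
    intro hpk
    have : p ≤ p * k := Nat.le_mul_of_pos_right p (Nat.pos_of_ne_zero hk0)
    omega
  · intro h; exact absurd (Finset.mem_range.mpr (Nat.succ_pos m)) h

/-- `p⁻¹ B_{(p-1)â_0}(1,y) = -Σ_V y^v/((p-1-Σv_i)! v_1!⋯v_N!)`, its
coefficients are rational numbers of norm `≤ 1` (i.e. lying in `ℤ_p`), and they are
congruent mod `p` (i.e. within distance `1/p`) to the coefficients of `Φ_1`. -/
theorem stmt_9 (p : ℕ) [Fact p.Prime] (hp2 : p ≠ 2)
    {K : Type*} [NormedField K] [IsUltrametricDist K] [CompleteSpace K] [IsAlgClosed K]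
    (ι : ℚ_[p] →+* K) (hι : ∀ x, ‖ι x‖ = ‖x‖)
    (π : K) (hπ : π ^ (p - 1) = -(p : K))
    (n N : ℕ) (hn : 0 < n) (hN : 0 < N) (a : Fin (N + 1) → Fin n → ℤ) :
    ((p : K)⁻¹ • AHG.Bone p a π (((p : ℤ) - 1) • AHG.hat (a 0)) =
      (fun ν : Fin N →₀ ℕ =>
        if 0 ≤ ((p : ℤ) - 1) - ∑ i : Fin N, (ν i : ℤ) ∧
            ((((p : ℤ) - 1) - ∑ i : Fin N, (ν i : ℤ)) • AHG.hat (a 0) +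
              ∑ i : Fin N, (ν i : ℤ) • AHG.hat (a i.succ)) =
              ((p : ℤ) - 1) • AHG.hat (a 0) then
          -((((((p : ℤ) - 1) - ∑ i : Fin N, (ν i : ℤ)).toNat.factorial *
              ∏ i : Fin N, (ν i).factorial : ℕ)) : K)⁻¹
        else 0)) ∧
    (∀ ν : Fin N →₀ ℕ, ∃ q : ℚ,
      ((p : K)⁻¹ • AHG.Bone p a π (((p : ℤ) - 1) • AHG.hat (a 0))) ν = (q : K) ∧
      ‖((p : K)⁻¹ • AHG.Bone p a π (((p : ℤ) - 1) • AHG.hat (a 0))) ν‖ ≤ 1) ∧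
    ∀ ν : Fin N →₀ ℕ,
      ‖((p : K)⁻¹ • AHG.Bone p a π (((p : ℤ) - 1) • AHG.hat (a 0))) ν -
          AHG.Phi1Series p a K ν‖ ≤ (p : ℝ)⁻¹ := by
  classical
  have hp : p.Prime := Fact.out
  have hple : 2 ≤ p := hp.two_le
  haveI : CharZero K := ⟨fun x y h => by
    have h2 : ι (x : ℚ_[p]) = ι (y : ℚ_[p]) := by rw [map_natCast, map_natCast, h]
    exact Nat.cast_injective (ι.injective h2)⟩
  set μ : Fin (n+1) → ℤ := ((p:ℤ) - 1) • AHG.hat (a 0) with hμ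
  have hμ0 : μ 0 = (p:ℤ) - 1 := by
    rw [hμ]; simp [AHG.hat]
  -- basic facts from the nonnegativity condition
  have hfacts : ∀ ν : Fin N →₀ ℕ, 0 ≤ (p:ℤ) - 1 - ∑ i : Fin N, (ν i : ℤ) →
      ((((p:ℤ) - 1 - ∑ i : Fin N, (ν i : ℤ)).toNat + ∑ i : Fin N, ν i = p - 1) ∧
        ∀ i, ν i < p) := by
    intro ν h1
    have hSs : (∑ i : Fin N, (ν i : ℤ)) = ((∑ i : Fin N, ν i : ℕ) : ℤ) := by
      push_cast; rfl
    constructor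
    · omega
    · intro i
      have hi : ν i ≤ ∑ j : Fin N, ν j :=
        Finset.single_le_sum (f := fun j => ν j) (fun _ _ => Nat.zero_le _)
          (Finset.mem_univ i)
      omega
  -- norm of integers
  have hnormInt : ∀ z : ℤ, ‖((z : ℤ) : K)‖ = ‖((z : ℤ) : ℚ_[p])‖ := by
    intro z; rw [← map_intCast ι z, hι]
  have hnorm1 : ∀ A : ℕ, ¬ p ∣ A → ‖((A : ℕ) : K)‖ = 1 := by
    intro A hA
    have h1 : ((A : ℕ) : K) = (((A : ℤ) : ℤ) : K) := by push_cast; ring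
    rw [h1, hnormInt]
    refine le_antisymm (Padic.norm_int_le_one _) ?_
    by_contra hlt
    push_neg at hlt
    have := (Padic.norm_intCast_lt_one_iff (k := (A : ℤ))).mp hlt
    exact hA (Int.ofNat_dvd.mp this)
  have hnormP : ∀ z : ℤ, (p:ℤ) ∣ z → ‖((z : ℤ) : K)‖ ≤ (p : ℝ)⁻¹ := by
    rintro z ⟨w, rfl⟩
    rw [hnormInt]
    push_cast
    rw [norm_mul, Padic.norm_p]
    calc (p:ℝ)⁻¹ * ‖((w : ℤ) : ℚ_[p])‖ ≤ (p:ℝ)⁻¹ * 1 := by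
          refine mul_le_mul_of_nonneg_left (Padic.norm_int_le_one _) (by positivity)
      _ = (p:ℝ)⁻¹ := mul_one _
  -- the `A` appearing in the closed formula is not divisible by `p`
  have hAnd : ∀ ν : Fin N →₀ ℕ, 0 ≤ (p:ℤ) - 1 - ∑ i : Fin N, (ν i : ℤ) →
      ¬ p ∣ (((p:ℤ) - 1 - ∑ i : Fin N, (ν i : ℤ)).toNat.factorial *
        ∏ i : Fin N, (ν i).factorial) := by
    intro ν h1 hd
    obtain ⟨hms, hlt⟩ := hfacts ν h1
    rcases (Nat.Prime.dvd_mul hp).mp hd with h | h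
    · have := (Nat.Prime.dvd_factorial hp).mp h
      omega
    · obtain ⟨i, _, hi⟩ := (Prime.dvd_finset_prod_iff hp.prime _).mp h
      have := (Nat.Prime.dvd_factorial hp).mp hi
      have := hlt i
      omega
  -- Part 1
  have hB : ((p : K)⁻¹ • AHG.Bone p a π μ) =
      (fun ν : Fin N →₀ ℕ =>
        if 0 ≤ ((p : ℤ) - 1) - ∑ i : Fin N, (ν i : ℤ) ∧
            ((((p : ℤ) - 1) - ∑ i : Fin N, (ν i : ℤ)) • AHG.hat (a 0) +
              ∑ i : Fin N, (ν i : ℤ) • AHG.hat (a i.succ)) = μ then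
          -((((((p : ℤ) - 1) - ∑ i : Fin N, (ν i : ℤ)).toNat.factorial *
              ∏ i : Fin N, (ν i).factorial : ℕ)) : K)⁻¹
        else 0) := by
    funext ν
    show (p : K)⁻¹ * AHG.Bone p a π μ ν = _
    unfold AHG.Bone
    rw [hμ0]
    split_ifs with hcond
    · obtain ⟨h1, h2⟩ := hcond
      obtain ⟨hms, hlt⟩ := hfacts ν h1
      set m : ℕ := ((p:ℤ) - 1 - ∑ i : Fin N, (ν i : ℤ)).toNat with hmdef
      have hmp : m < p := by omega
      rw [dworkB_of_lt p π hmp,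
        Finset.prod_congr rfl (fun i _ => dworkB_of_lt p π (hlt i)),
        Finset.prod_div_distrib, Finset.prod_pow_eq_pow_sum,
        div_mul_div_comm, ← pow_add, hms, hπ]
      have hf1 : ((m.factorial : ℕ) : K) ≠ 0 := Nat.cast_ne_zero.mpr m.factorial_ne_zero
      have hf2 : (∏ i : Fin N, (((ν i).factorial : ℕ) : K)) ≠ 0 :=
        Finset.prod_ne_zero_iff.mpr fun i _ =>
          Nat.cast_ne_zero.mpr (ν i).factorial_ne_zero
      have hpK : (p : K) ≠ 0 := Nat.cast_ne_zero.mpr hp.pos.ne'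
      push_cast
      field_simp
    · exact mul_zero _
  -- coefficients of the LHS
  have hBc := fun ν : Fin N →₀ ℕ => congrFun hB ν
  -- condition equivalence with the `Φ₁` condition
  have hce : ∀ ν : Fin N →₀ ℕ,
      (0 ≤ ((p : ℤ) - 1) - ∑ i : Fin N, (ν i : ℤ) ∧
        ((((p : ℤ) - 1) - ∑ i : Fin N, (ν i : ℤ)) • AHG.hat (a 0) +
          ∑ i : Fin N, (ν i : ℤ) • AHG.hat (a i.succ)) = μ) ↔
      ((fun i => ν i) ∈ AHG.LplusSet a ∧ ∑ i : Fin N, ν i ≤ p - 1) := by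
    intro ν
    have hSs : (∑ i : Fin N, (ν i : ℤ)) = ((∑ i : Fin N, ν i : ℕ) : ℤ) := by
      push_cast; rfl
    have hzsum : ∑ i : Fin N, (ν i : ℤ) • AHG.hat (a i.succ) =
        ∑ i : Fin N, ν i • AHG.hat (a i.succ) :=
      Finset.sum_congr rfl fun i _ => natCast_zsmul _ _
    constructor
    · rintro ⟨h1, h2⟩
      refine ⟨?_, by omega⟩
      simp only [AHG.LplusSet, Set.mem_setOf_eq]
      have h3 := eq_sub_of_add_eq' h2
      rw [hμ, ← sub_smul] at h3
      have h4 : (p:ℤ) - 1 - ((p:ℤ) - 1 - ∑ i : Fin N, (ν i : ℤ)) =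
          ∑ i : Fin N, (ν i : ℤ) := by ring
      rw [h4, hzsum, hSs, natCast_zsmul] at h3
      exact h3
    · rintro ⟨hL, hle⟩
      have h1 : 0 ≤ ((p : ℤ) - 1) - ∑ i : Fin N, (ν i : ℤ) := by omega
      refine ⟨h1, ?_⟩
      simp only [AHG.LplusSet, Set.mem_setOf_eq] at hL
      have h3 : ∑ i : Fin N, (ν i : ℤ) • AHG.hat (a i.succ) =
          (∑ i : Fin N, (ν i : ℤ)) • AHG.hat (a 0) := by
        rw [hzsum, hSs, natCast_zsmul]
        exact hL
      rw [h3, hμ, sub_smul]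
      abel
  refine ⟨hB, ?_, ?_⟩
  · -- Part 2
    intro ν
    rw [hBc ν]
    by_cases hc : 0 ≤ ((p : ℤ) - 1) - ∑ i : Fin N, (ν i : ℤ) ∧
        ((((p : ℤ) - 1) - ∑ i : Fin N, (ν i : ℤ)) • AHG.hat (a 0) +
          ∑ i : Fin N, (ν i : ℤ) • AHG.hat (a i.succ)) = μ
    · rw [if_pos hc]
      set A : ℕ := (((p : ℤ) - 1) - ∑ i : Fin N, (ν i : ℤ)).toNat.factorial *
        ∏ i : Fin N, (ν i).factorial with hAdef
      refine ⟨-((A : ℚ))⁻¹, by push_cast; ring, ?_⟩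
      rw [norm_neg, norm_inv, hnorm1 A (hAnd ν hc.1)]
      norm_num
    · rw [if_neg hc]
      exact ⟨0, by norm_num, by norm_num⟩
  · -- Part 3
    intro ν
    rw [hBc ν]
    unfold AHG.Phi1Series
    by_cases hc : 0 ≤ ((p : ℤ) - 1) - ∑ i : Fin N, (ν i : ℤ) ∧
        ((((p : ℤ) - 1) - ∑ i : Fin N, (ν i : ℤ)) • AHG.hat (a 0) +
          ∑ i : Fin N, (ν i : ℤ) • AHG.hat (a i.succ)) = μ
    · rw [if_pos hc, if_pos ((hce ν).mp hc)]
      obtain ⟨hms, hlt⟩ := hfacts ν hc.1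
      set m : ℕ := (((p : ℤ) - 1) - ∑ i : Fin N, (ν i : ℤ)).toNat with hmdef
      set s : ℕ := ∑ i : Fin N, ν i with hsdef
      set A : ℕ := m.factorial * ∏ i : Fin N, (ν i).factorial with hAdef
      have hAne : ((A : ℕ) : K) ≠ 0 := Nat.cast_ne_zero.mpr
        (Nat.mul_ne_zero m.factorial_ne_zero
          (Finset.prod_ne_zero_iff.mpr fun i _ => (ν i).factorial_ne_zero))
      have hCA : s.factorial * m.factorial = Nat.multinomial Finset.univ (fun i => ν i) * A := by
      /-hCAproof-/
        rw [hAdef]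
        have := Nat.multinomial_spec (Finset.univ : Finset (Fin N)) (fun i => ν i)
        calc s.factorial * m.factorial
            = ((∏ i : Fin N, (ν i).factorial) * Nat.multinomial Finset.univ (fun i => ν i)) *
              m.factorial := by rw [this]
          _ = Nat.multinomial Finset.univ (fun i => ν i) *
              (m.factorial * ∏ i : Fin N, (ν i).factorial) := by ring
      have hid : -((A : ℕ) : K)⁻¹ -
          (-1 : K) ^ s * (Nat.multinomial Finset.univ (fun i => ν i) : K) =
          (((1 + (-1)^s * ((s.factorial * m.factorial : ℕ) : ℤ) : ℤ)) : K) *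
            (-(((A : ℕ) : K))⁻¹) := by
        have hca := congrArg (fun x : ℕ => (x : K)) hCA
        push_cast at hca ⊢
        field_simp
        linear_combination ((-1:K)^s) * hca
      rw [hid, norm_mul, norm_neg, norm_inv, hnorm1 A (by rw [hAdef]; exact hAnd ν hc.1)]
      rw [inv_one, mul_one]
      exact hnormP _ (key_dvd p hp2 hms)
    · rw [if_neg hc, if_neg (fun h => hc ((hce ν).mpr h))]
      simp only [sub_zero, norm_zero]
      positivity
end

section
/- The polynomial B_{(p−1)â_0}(1, y_1,…,y_N) is an invertible element of R', of norm exactly 1/p; in particular all of its coefficients have norm ≤ 1/p, its constant term −p/(p−1)! has norm exactly 1/p, and for every λ ∈ 𝒟_+ one has ‖B_{(p−1)â_0}(1, λ_1/λ_0,…,λ_N/λ_0)‖ = 1/p, so that its reciprocal is a rational function in the λ_i/λ_0 defined at every point of 𝒟_+ and hence belongs to R'. -/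
open scoped BigOperators Classical

open scoped BigOperators Classical



section StmtTenAux

open Filter

private theorem aux_summable {ι E : Type*} [NormedAddCommGroup E] [IsUltrametricDist E]
    [CompleteSpace E] {f : ι → E}
    (h : Tendsto (fun i => ‖f i‖) cofinite (nhds 0)) : Summable f := by
  rw [summable_iff_vanishing]
  intro U hU
  obtain ⟨ε, hε, hball⟩ := Metric.mem_nhds_iff.mp hU
  have hfin : {i | ¬ ‖f i‖ < ε / 2}.Finite := by
    have := h.eventually_lt_const (half_pos hε)
    simpa [Filter.eventually_cofinite] using this
  refine ⟨hfin.toFinset, fun t ht => ?_⟩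
  apply hball
  rw [Metric.mem_ball, dist_zero_right]
  have hle : ‖∑ i ∈ t, f i‖ ≤ ε / 2 :=
    IsUltrametricDist.norm_sum_le_of_forall_le_of_nonneg (le_of_lt (half_pos hε))
      (fun i hi => by
        have h2 : i ∉ hfin.toFinset := Finset.disjoint_left.mp ht hi
        simp only [Set.Finite.mem_toFinset, Set.mem_setOf_eq, not_not] at h2
        exact h2.le)
  linarith

private theorem aux_dworkB (p : ℕ) {K : Type*} [Field K] (π : K) {i : ℕ} (hi : i < p) :
    AHG.dworkB p π i = π ^ i / (i.factorial : K) := by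
  rw [AHG.dworkB, Finset.sum_eq_single 0]
  · simp
  · intro k hk hk0
    have hpk : ¬ p * k ≤ i := by
      have h1 : p ≤ p * k := Nat.le_mul_of_pos_right p (Nat.pos_of_ne_zero hk0)
      omega
    rw [if_neg hpk]
  · intro h; exact absurd (Finset.mem_range.mpr (Nat.succ_pos i)) h

private theorem aux_choose_zmod (p : ℕ) [hp : Fact p.Prime] :
    ∀ s : ℕ, s ≤ p - 1 → (((p - 1).choose s : ℕ) : ZMod p) = (-1 : ZMod p) ^ s := by
  intro s
  induction s with
  | zero => intro _; simp
  | succ k ih =>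
    intro hk1
    have hp1 : 1 < p := hp.out.one_lt
    have hk : k ≤ p - 1 := by omega
    have h1 : (p - 1 - k) + (k + 1) = p := by omega
    have hcast : ((p - 1 - k : ℕ) : ZMod p) = -((k : ZMod p) + 1) := by
      have h2 := congrArg (fun m : ℕ => (m : ZMod p)) h1
      push_cast at h2
      rw [ZMod.natCast_self] at h2
      linear_combination h2
    have h3 := congrArg (fun m : ℕ => (m : ZMod p)) (Nat.choose_succ_right_eq (p - 1) k)
    push_cast at h3
    rw [hcast, ih hk] at h3
    have hne : ((k : ZMod p) + 1) ≠ 0 := by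
      have : ((k + 1 : ℕ) : ZMod p) ≠ 0 := by
        rw [Ne, ZMod.natCast_eq_zero_iff]
        intro hdvd
        have := Nat.le_of_dvd (Nat.succ_pos k) hdvd
        omega
      push_cast at this
      exact this
    refine mul_right_cancel₀ hne ?_
    linear_combination h3

private theorem aux_choose_dvd (p : ℕ) [hp : Fact p.Prime] {s : ℕ} (hs : s ≤ p - 1) :
    (p : ℤ) ∣ ((p - 1).choose s : ℤ) - (-1) ^ s := by
  have h0 := aux_choose_zmod p s hs
  rw [← ZMod.intCast_zmod_eq_zero_iff_dvd]
  push_cast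
  rw [h0]
  ring

end StmtTenAux
set_option maxHeartbeats 1600000 in
/-- `B_{(p-1)â_0}(1,y)` is an invertible element of `R'` of norm exactly
`1/p`: all its coefficients have norm `≤ 1/p`, its constant term is `-p/(p-1)!` of norm
exactly `1/p`, and its value at every `λ ∈ 𝒟_+` has norm `1/p`. -/
theorem stmt_10 (p : ℕ) [Fact p.Prime] (hp2 : p ≠ 2)
    {K : Type*} [NormedField K] [IsUltrametricDist K] [CompleteSpace K] [IsAlgClosed K]
    (ι : ℚ_[p] →+* K) (hι : ∀ x, ‖ι x‖ = ‖x‖)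
    (π : K) (hπ : π ^ (p - 1) = -(p : K))
    (n N : ℕ) (hn : 0 < n) (hN : 0 < N) (a : Fin (N + 1) → Fin n → ℤ) :
    AHG.memR' p a (AHG.Bone p a π (((p : ℤ) - 1) • AHG.hat (a 0))) ∧
    (∃ g : MvPowerSeries (Fin N) K, AHG.memR' p a g ∧
      AHG.Bone p a π (((p : ℤ) - 1) • AHG.hat (a 0)) * g = 1) ∧
    AHG.Rnorm (AHG.Bone p a π (((p : ℤ) - 1) • AHG.hat (a 0))) = (p : ℝ)⁻¹ ∧
    (∀ ν : Fin N →₀ ℕ,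
      ‖AHG.Bone p a π (((p : ℤ) - 1) • AHG.hat (a 0)) ν‖ ≤ (p : ℝ)⁻¹) ∧
    AHG.Bone p a π (((p : ℤ) - 1) • AHG.hat (a 0)) (0 : Fin N →₀ ℕ) =
      -(p : K) / (Nat.factorial (p - 1) : K) ∧
    ‖AHG.Bone p a π (((p : ℤ) - 1) • AHG.hat (a 0)) (0 : Fin N →₀ ℕ)‖ = (p : ℝ)⁻¹ ∧
    ∀ lam ∈ AHG.Dplus p a (K := K), ∃ s : K,
      HasSum (fun ν : Fin N →₀ ℕ =>
        AHG.Bone p a π (((p : ℤ) - 1) • AHG.hat (a 0)) ν *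
          ∏ i : Fin N, (lam i.succ / lam 0) ^ ν i) s ∧
      ‖s‖ = (p : ℝ)⁻¹ := by
  classical
  have hp : p.Prime := Fact.out
  have hp1 : 1 < p := hp.one_lt
  have hppos : (0:ℝ) < p := by exact_mod_cast hp.pos
  have hpinvpos : (0:ℝ) < (p:ℝ)⁻¹ := by positivity
  have hpinvlt : (p:ℝ)⁻¹ < 1 := by
    rw [inv_lt_one_iff₀]; right; exact_mod_cast hp1
  -- norms of casts
  have hKint : ∀ m : ℤ, ‖(m : K)‖ = ‖(m : ℚ_[p])‖ := fun m => by
    rw [← map_intCast ι m, hι]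
  have hKnat : ∀ m : ℕ, ‖(m : K)‖ = ‖(m : ℚ_[p])‖ := fun m => by
    simpa using hKint (m : ℤ)
  have hKnatle : ∀ m : ℕ, ‖(m : K)‖ ≤ 1 := fun m => by
    rw [hKnat]
    simpa using Padic.norm_int_le_one (p := p) (m : ℤ)
  have hpK : ‖(p : K)‖ = (p:ℝ)⁻¹ := by rw [hKnat]; exact Padic.norm_p
  have hKnatne : ∀ m : ℕ, m ≠ 0 → (m : K) ≠ 0 := by
    intro m hm
    rw [← norm_ne_zero_iff, hKnat, norm_ne_zero_iff]
    exact_mod_cast hm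
  have hfac1 : ∀ m : ℕ, m < p → ‖((m.factorial : ℕ) : K)‖ = 1 := by
    intro m hm
    refine le_antisymm (hKnatle _) ?_
    by_contra hlt
    push_neg at hlt
    rw [hKnat] at hlt
    have h2 : ‖((m.factorial : ℤ) : ℚ_[p])‖ < 1 := by exact_mod_cast hlt
    rw [Padic.norm_intCast_lt_one_iff] at h2
    have h3 : p ∣ m.factorial := by exact_mod_cast h2
    exact absurd ((Nat.Prime.dvd_factorial hp).mp h3) (by omega)
  have hfacne : ∀ m : ℕ, m < p → ((m.factorial : ℕ) : K) ≠ 0 :=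
    fun m _ => hKnatne _ (Nat.factorial_ne_zero m)
  have hπ1 : ‖π‖ ^ (p - 1) = (p:ℝ)⁻¹ := by
    rw [← norm_pow, hπ, norm_neg, hpK]
  set B : MvPowerSeries (Fin N) K := AHG.Bone p a π (((p:ℤ) - 1) • AHG.hat (a 0)) with hBdef
  have hμ0 : (((p:ℤ) - 1) • AHG.hat (a 0)) 0 = (p:ℤ) - 1 := by
    simp [AHG.hat]
  have hBapply : ∀ ν : Fin N →₀ ℕ,
      B ν = if 0 ≤ ((p:ℤ) - 1) - ∑ i : Fin N, (ν i : ℤ) ∧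
          (((p:ℤ) - 1) - ∑ i : Fin N, (ν i : ℤ)) • AHG.hat (a 0) +
            ∑ i : Fin N, (ν i : ℤ) • AHG.hat (a i.succ) = ((p:ℤ) - 1) • AHG.hat (a 0) then
        AHG.dworkB p π ((((p:ℤ) - 1) - ∑ i : Fin N, (ν i : ℤ)).toNat) *
          ∏ i : Fin N, AHG.dworkB p π (ν i)
      else 0 := by
    intro ν
    rw [hBdef]
    simp only [AHG.Bone, hμ0]
  clear_value B
  have hcast : ∀ ν : Fin N →₀ ℕ, ((∑ i : Fin N, ν i : ℕ) : ℤ) = ∑ i : Fin N, (ν i : ℤ) := by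
    intro ν; push_cast; rfl
  have hcond : ∀ ν : Fin N →₀ ℕ,
      (0 ≤ ((p:ℤ) - 1) - ∑ i : Fin N, (ν i : ℤ) ∧
        (((p:ℤ) - 1) - ∑ i : Fin N, (ν i : ℤ)) • AHG.hat (a 0) +
          ∑ i : Fin N, (ν i : ℤ) • AHG.hat (a i.succ) = ((p:ℤ) - 1) • AHG.hat (a 0))
      ↔ ((⇑ν ∈ AHG.LplusSet a) ∧ ∑ i : Fin N, ν i ≤ p - 1) := by
    intro ν
    have hmem : (⇑ν ∈ AHG.LplusSet a) ↔
        ∑ i : Fin N, (ν i : ℤ) • AHG.hat (a i.succ)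
          = (∑ i : Fin N, (ν i : ℤ)) • AHG.hat (a 0) := by
      have h1 : ∑ i : Fin N, (ν i : ℤ) • AHG.hat (a i.succ)
          = ∑ i : Fin N, ν i • AHG.hat (a i.succ) :=
        Finset.sum_congr rfl fun i _ => natCast_zsmul _ _
      have h2 : (∑ i : Fin N, (ν i : ℤ)) • AHG.hat (a 0)
          = (∑ i : Fin N, ν i) • AHG.hat (a 0) := by
        rw [← hcast ν]; exact natCast_zsmul _ _
      rw [h1, h2]
      exact Iff.rfl
    constructor
    · rintro ⟨h1, h2⟩
      have hle : ∑ i : Fin N, ν i ≤ p - 1 := by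
        have := hcast ν; omega
      refine ⟨hmem.mpr ?_, hle⟩
      have h4 := eq_sub_of_add_eq' h2
      rw [h4, ← sub_smul, sub_sub_cancel]
    · rintro ⟨h1, h2⟩
      constructor
      · have := hcast ν; omega
      · rw [hmem.mp h1, ← add_smul]
        congr 1
        ring
  have hBformula : ∀ ν : Fin N →₀ ℕ, ⇑ν ∈ AHG.LplusSet a → ∑ i : Fin N, ν i ≤ p - 1 →
      B ν = π ^ (p - 1) /
        (((p - 1 - ∑ i : Fin N, ν i).factorial : K) * ∏ i : Fin N, ((ν i).factorial : K)) := by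
    intro ν h1 h2
    have hνlt : ∀ i, ν i < p := by
      intro i
      have h5 : ν i ≤ ∑ j : Fin N, ν j :=
        Finset.single_le_sum (fun j _ => Nat.zero_le _) (Finset.mem_univ i)
      omega
    rw [hBapply, if_pos ((hcond ν).mpr ⟨h1, h2⟩)]
    have htonat : ((((p:ℤ) - 1) - ∑ i : Fin N, (ν i : ℤ)).toNat) = p - 1 - ∑ i : Fin N, ν i := by
      have := hcast ν; omega
    rw [htonat, aux_dworkB p π (show p - 1 - ∑ i : Fin N, ν i < p by omega)]
    rw [Finset.prod_congr rfl fun i _ => aux_dworkB p π (hνlt i)]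
    rw [Finset.prod_div_distrib, Finset.prod_pow_eq_pow_sum, div_mul_div_comm, ← pow_add]
    have hexp : p - 1 - (∑ i : Fin N, ν i) + ∑ i : Fin N, ν i = p - 1 := by omega
    rw [hexp]
  have hBzero : ∀ ν : Fin N →₀ ℕ,
      ¬(⇑ν ∈ AHG.LplusSet a ∧ ∑ i : Fin N, ν i ≤ p - 1) → B ν = 0 := by
    intro ν h
    rw [hBapply, if_neg (fun hc => h ((hcond ν).mp hc))]
  have hBnorm : ∀ ν : Fin N →₀ ℕ, ⇑ν ∈ AHG.LplusSet a → ∑ i : Fin N, ν i ≤ p - 1 →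
      ‖B ν‖ = (p:ℝ)⁻¹ := by
    intro ν h1 h2
    have hνlt : ∀ i, ν i < p := by
      intro i
      have h5 : ν i ≤ ∑ j : Fin N, ν j :=
        Finset.single_le_sum (fun j _ => Nat.zero_le _) (Finset.mem_univ i)
      omega
    rw [hBformula ν h1 h2, norm_div, norm_mul, norm_pow, hπ1,
      hfac1 _ (show p - 1 - ∑ i : Fin N, ν i < p by omega), norm_prod]
    rw [Finset.prod_congr rfl fun i _ => hfac1 _ (hνlt i), Finset.prod_const_one]
    simp
  have hBle : ∀ ν : Fin N →₀ ℕ, ‖B ν‖ ≤ (p:ℝ)⁻¹ := by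
    intro ν
    by_cases hc : ⇑ν ∈ AHG.LplusSet a ∧ ∑ i : Fin N, ν i ≤ p - 1
    · rw [hBnorm ν hc.1 hc.2]
    · rw [hBzero ν hc, norm_zero]; positivity
  have h0L : ⇑(0 : Fin N →₀ ℕ) ∈ AHG.LplusSet a := by
    show ∑ i : Fin N, (0 : Fin N →₀ ℕ) i • AHG.hat (a i.succ)
        = (∑ i : Fin N, (0 : Fin N →₀ ℕ) i) • AHG.hat (a 0)
    simp
  have hB0 : B 0 = -(p:K) / ((p - 1).factorial : K) := by
    rw [hBformula 0 h0L (by simp)]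
    simp only [Finsupp.coe_zero, Pi.zero_apply, Finset.sum_const_zero, Nat.sub_zero,
      Nat.factorial_zero, Nat.cast_one, Finset.prod_const_one, mul_one]
    rw [hπ]
  have hB0norm : ‖B 0‖ = (p:ℝ)⁻¹ := hBnorm 0 h0L (by simp)
  have hB0ne : B 0 ≠ 0 := by
    rw [← norm_ne_zero_iff, hB0norm]; positivity
  -- finite support
  set M0 : Fin N →₀ ℕ := Finsupp.equivFunOnFinite.symm (fun _ : Fin N => p - 1) with hM0def
  set T : Finset (Fin N →₀ ℕ) := Finset.Iic M0 with hTdef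
  have hmemT : ∀ ν : Fin N →₀ ℕ, ∑ i : Fin N, ν i ≤ p - 1 → ν ∈ T := by
    intro ν hν
    rw [hTdef, Finset.mem_Iic, Finsupp.le_def]
    intro i
    have h5 : ν i ≤ ∑ j : Fin N, ν j :=
      Finset.single_le_sum (fun j _ => Nat.zero_le _) (Finset.mem_univ i)
    show ν i ≤ p - 1
    omega
  have hsuppT : ∀ ν : Fin N →₀ ℕ, ν ∉ T → B ν = 0 := by
    intro ν hν
    by_cases hc : ⇑ν ∈ AHG.LplusSet a ∧ ∑ i : Fin N, ν i ≤ p - 1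
    · exact absurd (hmemT ν hc.2) hν
    · exact hBzero ν hc
  set F : (Fin (N + 1) → K) → K :=
    fun lam => ∑ ν ∈ T, B ν * ∏ i : Fin N, (lam i.succ / lam 0) ^ ν i with hFdef
  have hHasSumF : ∀ lam : Fin (N + 1) → K,
      HasSum (fun ν : Fin N →₀ ℕ => B ν * ∏ i : Fin N, (lam i.succ / lam 0) ^ ν i) (F lam) :=
    fun lam => hasSum_sum_of_ne_finset_zero (fun ν hν => by rw [hsuppT ν hν, zero_mul])
  set qB : MvPolynomial (Fin N) K := ∑ ν ∈ T, MvPolynomial.monomial ν (B ν) with hqBdef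
  have hqB : ∀ y : Fin N → K,
      MvPolynomial.eval y qB = ∑ ν ∈ T, B ν * ∏ i : Fin N, y i ^ ν i := by
    intro y
    rw [hqBdef, map_sum]
    exact Finset.sum_congr rfl fun ν _ => by rw [MvPolynomial.eval_monomial, Finsupp.prod_pow]
  have hFeval : ∀ lam : Fin (N + 1) → K,
      F lam = MvPolynomial.eval (fun i => lam i.succ / lam 0) qB := fun lam => (hqB _).symm
  have hconstUL : ∀ G : (Fin (N + 1) → K) → K,
      AHG.RatOnDplus p a G → AHG.UnifLimitRat p a G := by
    intro G hG
    refine ⟨fun _ => G, fun _ => hG, ?_⟩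
    intro u hu
    exact Filter.Eventually.of_forall fun k x _ => refl_mem_uniformity hu
  have hratF : AHG.RatOnDplus p a F := by
    refine ⟨qB, 1, fun lam _ => by simp, fun lam _ => ?_⟩
    rw [hFeval lam]; simp
  have hmemR'B : AHG.memR' p a B := ⟨F, hconstUL F hratF, fun lam _ => hHasSumF lam⟩
  -- Phi1 as a sum over T
  have hPhi1 : ∀ lam : Fin (N + 1) → K, AHG.Phi1 p a lam =
      ∑ ν ∈ T, (if ⇑ν ∈ AHG.LplusSet a ∧ ∑ i : Fin N, ν i ≤ p - 1 then
          (-1 : K) ^ (∑ i : Fin N, ν i) * (Nat.multinomial Finset.univ ⇑ν : K) else 0) *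
        ∏ i : Fin N, (lam i.succ / lam 0) ^ ν i := by
    intro lam
    rw [AHG.Phi1, Finset.sum_filter]
    refine Finset.sum_nbij' (i := fun l : Fin N → ℕ => Finsupp.equivFunOnFinite.symm l)
      (j := fun ν : Fin N →₀ ℕ => ⇑ν) ?_ ?_ ?_ ?_ ?_
    · intro l hl
      rw [Finset.mem_Iic, Finsupp.le_def]
      intro i
      have h2 : l i < p := by
        have := (Fintype.mem_piFinset.mp hl) i
        simpa [Finset.mem_range] using this
      show l i ≤ p - 1
      omega
    · intro ν hν
      rw [Fintype.mem_piFinset]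
      intro i
      rw [Finset.mem_range]
      have h2 : ν i ≤ p - 1 := (Finsupp.le_def.mp (Finset.mem_Iic.mp hν)) i
      show ν i < p
      omega
    · intro l _
      exact Finsupp.equivFunOnFinite.apply_symm_apply l
    · intro ν _
      exact Finsupp.equivFunOnFinite.symm_apply_apply ν
    · intro l _
      rw [ite_mul, zero_mul]
      simp only [show ⇑(Finsupp.equivFunOnFinite.symm l) = l from rfl]
  -- coefficient comparison with Phi1
  have hBc : ∀ ν : Fin N →₀ ℕ, ⇑ν ∈ AHG.LplusSet a → ∑ i : Fin N, ν i ≤ p - 1 →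
      B ν = B 0 * ((((p - 1).choose (∑ i : Fin N, ν i)) *
        Nat.multinomial Finset.univ ⇑ν : ℕ) : K) := by
    intro ν h1 h2
    have hνlt : ∀ i, ν i < p := by
      intro i
      have h5 : ν i ≤ ∑ j : Fin N, ν j :=
        Finset.single_le_sum (fun j _ => Nat.zero_le _) (Finset.mem_univ i)
      omega
    have hmul : Nat.multinomial Finset.univ ⇑ν * ∏ i : Fin N, (ν i).factorial
        = (∑ i : Fin N, ν i).factorial := by
      have := Nat.multinomial_spec (Finset.univ : Finset (Fin N)) ⇑ν
      rw [mul_comm] at this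
      exact this
    have hnat : ((p - 1).choose (∑ i : Fin N, ν i) * Nat.multinomial Finset.univ ⇑ν) *
        ((p - 1 - ∑ i : Fin N, ν i).factorial * ∏ i : Fin N, (ν i).factorial)
        = (p - 1).factorial := by
      calc ((p - 1).choose (∑ i : Fin N, ν i) * Nat.multinomial Finset.univ ⇑ν) *
            ((p - 1 - ∑ i : Fin N, ν i).factorial * ∏ i : Fin N, (ν i).factorial)
          = ((p - 1).choose (∑ i : Fin N, ν i) *
              (Nat.multinomial Finset.univ ⇑ν * ∏ i : Fin N, (ν i).factorial)) *
            (p - 1 - ∑ i : Fin N, ν i).factorial := by ring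
        _ = (p - 1).choose (∑ i : Fin N, ν i) * (∑ i : Fin N, ν i).factorial *
            (p - 1 - ∑ i : Fin N, ν i).factorial := by rw [hmul, mul_assoc]
        _ = (p - 1).factorial := Nat.choose_mul_factorial_mul_factorial h2
    have hKid : (((p - 1).factorial : ℕ) : K) =
        ((((p - 1).choose (∑ i : Fin N, ν i) * Nat.multinomial Finset.univ ⇑ν : ℕ)) : K) *
          (((p - 1 - ∑ i : Fin N, ν i).factorial : K) * ∏ i : Fin N, ((ν i).factorial : K)) := by
      rw [← Nat.cast_prod]
      exact_mod_cast congrArg (fun m : ℕ => (m : K)) hnat.symm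
    have hD : (((p - 1 - ∑ i : Fin N, ν i).factorial : K) *
        ∏ i : Fin N, ((ν i).factorial : K)) ≠ 0 := by
      refine mul_ne_zero (hfacne _ (by omega)) ?_
      rw [Finset.prod_ne_zero_iff]
      exact fun i _ => hfacne _ (hνlt i)
    rw [hBformula ν h1 h2, hB0, ← hπ, div_mul_eq_mul_div,
      div_eq_div_iff hD (hfacne _ (by omega))]
    linear_combination (π ^ (p - 1)) * hKid
  -- termwise estimate for F - B0 * Phi1
  have hterm : ∀ (y : Fin N → K), (∀ i, ‖y i‖ ≤ 1) → ∀ ν : Fin N →₀ ℕ,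
      ‖(B ν - B 0 * (if ⇑ν ∈ AHG.LplusSet a ∧ ∑ i : Fin N, ν i ≤ p - 1 then
          (-1 : K) ^ (∑ i : Fin N, ν i) * (Nat.multinomial Finset.univ ⇑ν : K) else 0)) *
        ∏ i : Fin N, y i ^ ν i‖ ≤ (p:ℝ)⁻¹ * (p:ℝ)⁻¹ := by
    intro y hy ν
    by_cases hc : ⇑ν ∈ AHG.LplusSet a ∧ ∑ i : Fin N, ν i ≤ p - 1
    case neg =>
      rw [if_neg hc, hBzero ν hc, mul_zero, sub_zero, zero_mul, norm_zero]
      positivity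
    case pos =>
      obtain ⟨h1, h2⟩ := hc
      rw [if_pos ⟨h1, h2⟩, hBc ν h1 h2]
      have hkey : B 0 * ((((p - 1).choose (∑ i : Fin N, ν i) *
              Nat.multinomial Finset.univ ⇑ν : ℕ)) : K) -
          B 0 * ((-1 : K) ^ (∑ i : Fin N, ν i) * (Nat.multinomial Finset.univ ⇑ν : K)) =
          B 0 * (Nat.multinomial Finset.univ ⇑ν : K) *
            ((((p - 1).choose (∑ i : Fin N, ν i) : ℤ) : K) - (-1 : K) ^ (∑ i : Fin N, ν i)) := by
        push_cast
        ring
      rw [hkey]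
      have hdvd : ‖(((p - 1).choose (∑ i : Fin N, ν i) : ℤ) : K) -
          (-1 : K) ^ (∑ i : Fin N, ν i)‖ ≤ (p:ℝ)⁻¹ := by
        have hd := aux_choose_dvd p (s := ∑ i : Fin N, ν i) h2
        have hcastK : (((((p - 1).choose (∑ i : Fin N, ν i) : ℤ) -
            (-1) ^ (∑ i : Fin N, ν i)) : ℤ) : K) =
            (((p - 1).choose (∑ i : Fin N, ν i) : ℤ) : K) -
              (-1 : K) ^ (∑ i : Fin N, ν i) := by push_cast; ring
        rw [← hcastK, hKint]
        have := (Padic.norm_int_le_pow_iff_dvd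
          (((p - 1).choose (∑ i : Fin N, ν i) : ℤ) - (-1) ^ (∑ i : Fin N, ν i)) 1).mpr
          (by simpa using hd)
        simpa using this
      have hprod : ‖∏ i : Fin N, y i ^ ν i‖ ≤ 1 := by
        rw [norm_prod]
        exact Finset.prod_le_one (fun i _ => norm_nonneg _)
          (fun i _ => by rw [norm_pow]; exact pow_le_one₀ (norm_nonneg _) (hy i))
      calc ‖B 0 * (Nat.multinomial Finset.univ ⇑ν : K) *
            ((((p - 1).choose (∑ i : Fin N, ν i) : ℤ) : K) -
              (-1 : K) ^ (∑ i : Fin N, ν i)) * ∏ i : Fin N, y i ^ ν i‖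
          = ‖B 0‖ * ‖(Nat.multinomial Finset.univ ⇑ν : K)‖ *
            ‖(((p - 1).choose (∑ i : Fin N, ν i) : ℤ) : K) -
              (-1 : K) ^ (∑ i : Fin N, ν i)‖ * ‖∏ i : Fin N, y i ^ ν i‖ := by
            rw [norm_mul, norm_mul, norm_mul]
        _ ≤ (p:ℝ)⁻¹ * 1 * (p:ℝ)⁻¹ * 1 := by
            have hmn : ‖(Nat.multinomial Finset.univ ⇑ν : K)‖ ≤ 1 := hKnatle _
            have hb0 : ‖B 0‖ ≤ (p:ℝ)⁻¹ := hB0norm.le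
            gcongr <;> positivity
        _ = (p:ℝ)⁻¹ * (p:ℝ)⁻¹ := by ring
  have hFDplus : ∀ lam ∈ AHG.Dplus p a (K := K), ‖F lam‖ = (p:ℝ)⁻¹ := by
    rintro lam ⟨hlam0, hyle, hphi⟩
    have hdiffle : ‖F lam - B 0 * AHG.Phi1 p a lam‖ ≤ (p:ℝ)⁻¹ * (p:ℝ)⁻¹ := by
      rw [hPhi1 lam]
      simp only [hFdef]
      rw [Finset.mul_sum, ← Finset.sum_sub_distrib]
      refine IsUltrametricDist.norm_sum_le_of_forall_le_of_nonneg (by positivity) ?_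
      intro ν hν
      have heq : B ν * ∏ i : Fin N, (lam i.succ / lam 0) ^ ν i -
          B 0 * ((if ⇑ν ∈ AHG.LplusSet a ∧ ∑ i : Fin N, ν i ≤ p - 1 then
            (-1 : K) ^ (∑ i : Fin N, ν i) * (Nat.multinomial Finset.univ ⇑ν : K) else 0) *
              ∏ i : Fin N, (lam i.succ / lam 0) ^ ν i) =
          (B ν - B 0 * (if ⇑ν ∈ AHG.LplusSet a ∧ ∑ i : Fin N, ν i ≤ p - 1 then
            (-1 : K) ^ (∑ i : Fin N, ν i) * (Nat.multinomial Finset.univ ⇑ν : K) else 0)) *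
              ∏ i : Fin N, (lam i.succ / lam 0) ^ ν i := by ring
      rw [heq]
      exact hterm (fun i => lam i.succ / lam 0) hyle ν
    have hphin : ‖B 0 * AHG.Phi1 p a lam‖ = (p:ℝ)⁻¹ := by
      rw [norm_mul, hphi, hB0norm, mul_one]
    have hltn : ‖F lam - B 0 * AHG.Phi1 p a lam‖ < ‖B 0 * AHG.Phi1 p a lam‖ := by
      rw [hphin]
      refine lt_of_le_of_lt hdiffle ?_
      nlinarith
    have hmax := IsUltrametricDist.norm_add_eq_max_of_norm_ne_norm (ne_of_lt hltn)
    rw [sub_add_cancel] at hmax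
    rw [hmax, sup_eq_right.mpr (le_of_lt hltn), hphin]
  -- the inverse power series
  have hconstB : MvPowerSeries.constantCoeff B ≠ 0 := hB0ne
  obtain ⟨g, hBg1⟩ : ∃ g' : MvPowerSeries (Fin N) K, B * g' = 1 :=
    ⟨B⁻¹, MvPowerSeries.mul_inv_cancel B hconstB⟩
  have hgle : ∀ ν : Fin N →₀ ℕ, ‖g ν‖ ≤ (p:ℝ) := by
    suffices H : ∀ d : ℕ, ∀ ν : Fin N →₀ ℕ, ∑ i : Fin N, ν i = d → ‖g ν‖ ≤ (p:ℝ) by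
      intro ν; exact H _ ν rfl
    intro d
    induction d using Nat.strong_induction_on with
    | _ d IH =>
    intro ν hνd
    have hc := congrArg (MvPowerSeries.coeff ν) hBg1
    rw [MvPowerSeries.coeff_mul, MvPowerSeries.coeff_one] at hc
    have hmem : ((0 : Fin N →₀ ℕ), ν) ∈ Finset.HasAntidiagonal.antidiagonal ν := by
      rw [Finset.HasAntidiagonal.mem_antidiagonal, zero_add]
    rw [← Finset.add_sum_erase _ _ hmem] at hc
    have hrest : ‖∑ q ∈ (Finset.HasAntidiagonal.antidiagonal ν).erase ((0 : Fin N →₀ ℕ), ν),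
        MvPowerSeries.coeff q.1 B * MvPowerSeries.coeff q.2 g‖ ≤ 1 := by
      refine IsUltrametricDist.norm_sum_le_of_forall_le_of_nonneg zero_le_one ?_
      intro q hq
      obtain ⟨hqne, hqmem⟩ := Finset.mem_erase.mp hq
      rw [Finset.HasAntidiagonal.mem_antidiagonal] at hqmem
      have hq1 : q.1 ≠ 0 := by
        rintro h0
        exact hqne (Prod.ext h0 (by rw [← hqmem, h0, zero_add]))
      have hsum : ∑ i : Fin N, q.1 i + ∑ i : Fin N, q.2 i = d := by
        rw [← hνd, ← Finset.sum_add_distrib]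
        refine Finset.sum_congr rfl fun i _ => ?_
        rw [← hqmem]
        rfl
      have hpos : 0 < ∑ i : Fin N, q.1 i := by
        rcases Nat.eq_zero_or_pos (∑ i : Fin N, q.1 i) with h | h
        · exfalso
          apply hq1
          ext i
          exact (Finset.sum_eq_zero_iff.mp h) i (Finset.mem_univ i)
        · exact h
      have hlt : ∑ i : Fin N, q.2 i < d := by omega
      have hgq : ‖g q.2‖ ≤ (p:ℝ) := IH _ hlt q.2 rfl
      have hle2 : ‖MvPowerSeries.coeff q.1 B * MvPowerSeries.coeff q.2 g‖
          ≤ (p:ℝ)⁻¹ * p := by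
        rw [norm_mul]
        exact mul_le_mul (hBle q.1) hgq (norm_nonneg _) hpinvpos.le
      calc ‖MvPowerSeries.coeff q.1 B * MvPowerSeries.coeff q.2 g‖
          ≤ (p:ℝ)⁻¹ * p := hle2
        _ = 1 := inv_mul_cancel₀ (by positivity)
    have h2 : MvPowerSeries.coeff (0 : Fin N →₀ ℕ) B * MvPowerSeries.coeff ν g =
        (if ν = 0 then (1:K) else 0) -
          ∑ q ∈ (Finset.HasAntidiagonal.antidiagonal ν).erase ((0 : Fin N →₀ ℕ), ν),
            MvPowerSeries.coeff q.1 B * MvPowerSeries.coeff q.2 g :=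
      eq_sub_of_add_eq hc
    have h3 : ‖MvPowerSeries.coeff (0 : Fin N →₀ ℕ) B * MvPowerSeries.coeff ν g‖ ≤ 1 := by
      rw [h2, sub_eq_add_neg]
      refine le_trans (IsUltrametricDist.norm_add_le_max _ _) ?_
      rw [norm_neg]
      refine max_le ?_ hrest
      split <;> simp
    rw [norm_mul] at h3
    have hB0' : ‖MvPowerSeries.coeff (0 : Fin N →₀ ℕ) B‖ = (p:ℝ)⁻¹ := hB0norm
    rw [hB0'] at h3
    have h4 := mul_le_mul_of_nonneg_left h3 hppos.le
    rw [← mul_assoc, mul_inv_cancel₀ (ne_of_gt hppos), one_mul, mul_one] at h4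
    exact h4
  -- sum of degrees tends to infinity on the cofinite filter
  have hSigTendsto : Filter.Tendsto (fun ν : Fin N →₀ ℕ => ∑ i : Fin N, ν i)
      Filter.cofinite Filter.atTop := by
    rw [Filter.tendsto_atTop]
    intro M
    rw [Filter.eventually_cofinite]
    refine Set.Finite.subset
      (Finset.finite_toSet (Finset.Iic (Finsupp.equivFunOnFinite.symm fun _ : Fin N => M))) ?_
    intro ν hν
    simp only [Set.mem_setOf_eq, not_le] at hν
    rw [Finset.mem_coe, Finset.mem_Iic, Finsupp.le_def]
    intro i
    have h5 : ν i ≤ ∑ j : Fin N, ν j :=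
      Finset.single_le_sum (fun j _ => Nat.zero_le _) (Finset.mem_univ i)
    show ν i ≤ M
    omega
  -- main analytic statement on Dopen
  have hDopenMain : ∀ lam ∈ AHG.Dopen (N := N) (K := K),
      ‖F lam‖ = (p:ℝ)⁻¹ ∧
      HasSum (fun ν : Fin N →₀ ℕ => g ν * ∏ i : Fin N, (lam i.succ / lam 0) ^ ν i)
        ((F lam)⁻¹) := by
    rintro lam ⟨hlam0, hylt⟩
    set y : Fin N → K := fun i => lam i.succ / lam 0 with hydef
    have hyle : ∀ i, ‖y i‖ ≤ 1 := fun i => (hylt i).le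
    have hNE : Nonempty (Fin N) := ⟨⟨0, hN⟩⟩
    have huniv : (Finset.univ : Finset (Fin N)).Nonempty := Finset.univ_nonempty
    set r : ℝ := Finset.univ.sup' huniv (fun i : Fin N => ‖y i‖) with hrdef
    have hr1 : r < 1 := (Finset.sup'_lt_iff huniv).mpr fun i _ => hylt i
    have hyler : ∀ i, ‖y i‖ ≤ r :=
      fun i => Finset.le_sup' (fun j : Fin N => ‖y j‖) (Finset.mem_univ i)
    have hr0 : 0 ≤ r := le_trans (norm_nonneg (y ⟨0, hN⟩)) (hyler _)
    have h0T : (0 : Fin N →₀ ℕ) ∈ T := by rw [hTdef, Finset.mem_Iic]; exact zero_le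
    have hFnorm : ‖F lam‖ = (p:ℝ)⁻¹ := by
      have hsplit : F lam = B 0 * ∏ i : Fin N, y i ^ (0 : Fin N →₀ ℕ) i +
          ∑ ν ∈ T.erase 0, B ν * ∏ i : Fin N, y i ^ ν i := by
        simp only [hFdef]
        rw [← Finset.add_sum_erase _ _ h0T]
      have hterm0 : B 0 * ∏ i : Fin N, y i ^ (0 : Fin N →₀ ℕ) i = B 0 := by simp
      have hrest : ‖∑ ν ∈ T.erase 0, B ν * ∏ i : Fin N, y i ^ ν i‖ ≤ (p:ℝ)⁻¹ * r := by
        refine IsUltrametricDist.norm_sum_le_of_forall_le_of_nonneg (by positivity) ?_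
        intro ν hν
        obtain ⟨hν0, hνT⟩ := Finset.mem_erase.mp hν
        obtain ⟨i0, hi0⟩ : ∃ i0, ν i0 ≠ 0 := by
          by_contra hcon
          push_neg at hcon
          exact hν0 (Finsupp.ext hcon)
        have hprod : ‖∏ i : Fin N, y i ^ ν i‖ ≤ r := by
          rw [norm_prod]
          calc ∏ i : Fin N, ‖y i ^ ν i‖
              = ‖y i0 ^ ν i0‖ * ∏ i ∈ Finset.univ.erase i0, ‖y i ^ ν i‖ :=
                (Finset.mul_prod_erase _ _ (Finset.mem_univ i0)).symm
            _ ≤ r * 1 := by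
                refine mul_le_mul ?_ ?_ ?_ hr0
                · rw [norm_pow]
                  exact le_trans (pow_le_of_le_one (norm_nonneg _) (hyle i0) hi0) (hyler i0)
                · exact Finset.prod_le_one (fun i _ => norm_nonneg _)
                    (fun i _ => by rw [norm_pow]; exact pow_le_one₀ (norm_nonneg _) (hyle i))
                · exact Finset.prod_nonneg fun i _ => norm_nonneg _
            _ = r := mul_one r
        calc ‖B ν * ∏ i : Fin N, y i ^ ν i‖
            = ‖B ν‖ * ‖∏ i : Fin N, y i ^ ν i‖ := norm_mul _ _
          _ ≤ (p:ℝ)⁻¹ * r := mul_le_mul (hBle ν) hprod (norm_nonneg _) hpinvpos.le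
      have hltnorm : ‖∑ ν ∈ T.erase 0, B ν * ∏ i : Fin N, y i ^ ν i‖ < ‖B 0‖ := by
        rw [hB0norm]
        refine lt_of_le_of_lt hrest ?_
        nlinarith
      rw [hsplit, hterm0, add_comm,
        IsUltrametricDist.norm_add_eq_max_of_norm_ne_norm (ne_of_lt hltnorm),
        sup_eq_right.mpr (le_of_lt hltnorm), hB0norm]
    refine ⟨hFnorm, ?_⟩
    have hFne : F lam ≠ 0 := by rw [← norm_ne_zero_iff, hFnorm]; positivity
    set gt : (Fin N →₀ ℕ) → K := fun ν => g ν * ∏ i : Fin N, y i ^ ν i with hgtdef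
    have hgtbound : ∀ ν, ‖gt ν‖ ≤ (p:ℝ) * r ^ (∑ i : Fin N, ν i) := by
      intro ν
      simp only [hgtdef]
      rw [norm_mul]
      refine mul_le_mul (hgle ν) ?_ (norm_nonneg _) hppos.le
      rw [norm_prod, ← Finset.prod_pow_eq_pow_sum]
      exact Finset.prod_le_prod (fun i _ => norm_nonneg _)
        (fun i _ => by rw [norm_pow]; exact pow_le_pow_left₀ (norm_nonneg _) (hyler i) _)
    have hgt0 : Filter.Tendsto (fun ν : Fin N →₀ ℕ => ‖gt ν‖) Filter.cofinite (nhds 0) := by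
      refine squeeze_zero (fun ν => norm_nonneg _) hgtbound ?_
      have h1 : Filter.Tendsto (fun m : ℕ => (p:ℝ) * r ^ m) Filter.atTop (nhds 0) := by
        have h2 := tendsto_pow_atTop_nhds_zero_of_lt_one hr0 hr1
        simpa using h2.const_mul (p:ℝ)
      exact h1.comp hSigTendsto
    have hgtsummable : Summable gt := aux_summable hgt0
    obtain ⟨G, hG⟩ := hgtsummable
    set Fp : (Fin N →₀ ℕ) × (Fin N →₀ ℕ) → K :=
      fun q => (B q.1 * ∏ i : Fin N, y i ^ q.1 i) * gt q.2 with hFpdef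
    have hFpsummable : Summable Fp := by
      refine aux_summable ?_
      rw [Metric.tendsto_nhds]
      intro ε hε
      rw [Filter.eventually_cofinite]
      have hdist : ∀ q : (Fin N →₀ ℕ) × (Fin N →₀ ℕ),
          dist ‖Fp q‖ 0 = ‖Fp q‖ := fun q => by
        rw [Real.dist_0_eq_abs, abs_of_nonneg (norm_nonneg _)]
      refine Set.Finite.subset (Set.Finite.prod (Finset.finite_toSet T)
        (Filter.eventually_cofinite.mp (hgt0.eventually_lt_const hε))) ?_
      intro q hq
      simp only [Set.mem_setOf_eq, hdist, not_lt] at hq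
      constructor
      · by_contra hT
        rw [hFpdef] at hq
        simp only at hq
        rw [hsuppT q.1 hT, zero_mul, zero_mul, norm_zero] at hq
        linarith
      · simp only [Set.mem_setOf_eq, not_lt]
        have h1 : ‖B q.1 * ∏ i : Fin N, y i ^ q.1 i‖ ≤ 1 := by
          rw [norm_mul]
          have hpr : ‖∏ i : Fin N, y i ^ q.1 i‖ ≤ 1 := by
            rw [norm_prod]
            exact Finset.prod_le_one (fun i _ => norm_nonneg _)
              (fun i _ => by rw [norm_pow]; exact pow_le_one₀ (norm_nonneg _) (hyle i))
          calc ‖B q.1‖ * ‖∏ i : Fin N, y i ^ q.1 i‖ ≤ (p:ℝ)⁻¹ * 1 :=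
              mul_le_mul (hBle q.1) hpr (norm_nonneg _) hpinvpos.le
            _ ≤ 1 := by rw [mul_one]; exact hpinvlt.le
        have hble : ‖Fp q‖ ≤ ‖gt q.2‖ := by
          calc ‖Fp q‖ = ‖B q.1 * ∏ i : Fin N, y i ^ q.1 i‖ * ‖gt q.2‖ := norm_mul _ _
            _ ≤ 1 * ‖gt q.2‖ := mul_le_mul_of_nonneg_right h1 (norm_nonneg _)
            _ = ‖gt q.2‖ := one_mul _
        linarith
    obtain ⟨S, hS⟩ := hFpsummable
    have hfib1 : ∀ α : Fin N →₀ ℕ,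
        HasSum (fun β => Fp (α, β)) ((B α * ∏ i : Fin N, y i ^ α i) * G) := by
      intro α
      simp only [hFpdef]
      exact hG.mul_left (B α * ∏ i : Fin N, y i ^ α i)
    have hgrp1 : HasSum (fun α : Fin N →₀ ℕ => (B α * ∏ i : Fin N, y i ^ α i) * G) S :=
      hS.prod_fiberwise hfib1
    have hFG : HasSum (fun α : Fin N →₀ ℕ => (B α * ∏ i : Fin N, y i ^ α i) * G)
        (F lam * G) := (hHasSumF lam).mul_right G
    have hSFG : S = F lam * G := hgrp1.unique hFG
    set f2 : (Fin N →₀ ℕ) × (Fin N →₀ ℕ) → K :=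
      fun q => if q.2 ≤ q.1 then B q.2 * g (q.1 - q.2) * ∏ i : Fin N, y i ^ q.1 i else 0
      with hf2def
    have hcomp : ∀ q : (Fin N →₀ ℕ) × (Fin N →₀ ℕ), f2 (q.1 + q.2, q.1) = Fp q := by
      intro q
      simp only [hf2def, hFpdef, hgtdef]
      rw [if_pos le_self_add, add_tsub_cancel_left]
      have hpr : ∏ i : Fin N, y i ^ (q.1 + q.2) i =
          (∏ i : Fin N, y i ^ q.1 i) * ∏ i : Fin N, y i ^ q.2 i := by
        rw [← Finset.prod_mul_distrib]
        exact Finset.prod_congr rfl fun i _ => by rw [Finsupp.add_apply, pow_add]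
      rw [hpr]
      ring
    have hinj : Function.Injective
        (fun q : (Fin N →₀ ℕ) × (Fin N →₀ ℕ) => ((q.1 + q.2, q.1) :
          (Fin N →₀ ℕ) × (Fin N →₀ ℕ))) := by
      rintro ⟨a1, b1⟩ ⟨a2, b2⟩ hq
      simp only [Prod.mk.injEq] at hq
      obtain ⟨hq1, hq2⟩ := hq
      subst hq2
      exact Prod.ext rfl (add_left_cancel hq1)
    have hf2sum : HasSum f2 S := by
      rw [← Function.Injective.hasSum_iff hinj ?_]
      · have hce : (f2 ∘ fun q : (Fin N →₀ ℕ) × (Fin N →₀ ℕ) => (q.1 + q.2, q.1)) = Fp :=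
          funext hcomp
        rw [hce]
        exact hS
      · intro q hq
        refine if_neg ?_
        intro hle
        refine hq ⟨(q.2, q.1 - q.2), ?_⟩
        exact Prod.ext (add_tsub_cancel_of_le hle) rfl
    have hfib2 : ∀ νt : Fin N →₀ ℕ,
        HasSum (fun α => f2 (νt, α)) (if νt = 0 then (1:K) else 0) := by
      intro νt
      have hvanish : ∀ α ∉ Finset.Iic νt, f2 (νt, α) = 0 := by
        intro α hα
        exact if_neg (by simpa [Finset.mem_Iic] using hα)
      have hsum2 := hasSum_sum_of_ne_finset_zero (L := SummationFilter.unconditional _) hvanish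
      have heq : ∑ α ∈ Finset.Iic νt, f2 (νt, α) = (if νt = 0 then (1:K) else 0) := by
        have h1 : ∑ α ∈ Finset.Iic νt, f2 (νt, α) =
            (∑ α ∈ Finset.Iic νt, B α * g (νt - α)) * ∏ i : Fin N, y i ^ νt i := by
          rw [Finset.sum_mul]
          refine Finset.sum_congr rfl fun α hα => ?_
          simp only [hf2def]
          rw [if_pos (Finset.mem_Iic.mp hα)]
        have h2 : ∑ α ∈ Finset.Iic νt, B α * g (νt - α) =
            ∑ q ∈ Finset.HasAntidiagonal.antidiagonal νt,
              MvPowerSeries.coeff q.1 B * MvPowerSeries.coeff q.2 g := by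
          refine (Finset.sum_nbij'
            (i := fun q : (Fin N →₀ ℕ) × (Fin N →₀ ℕ) => q.1)
            (j := fun α : Fin N →₀ ℕ => ((α, νt - α) : (Fin N →₀ ℕ) × (Fin N →₀ ℕ)))
            ?_ ?_ ?_ ?_ ?_).symm
          · intro q hq
            rw [Finset.HasAntidiagonal.mem_antidiagonal] at hq
            rw [Finset.mem_Iic, ← hq]
            exact le_self_add
          · intro α hα
            rw [Finset.HasAntidiagonal.mem_antidiagonal]
            exact add_tsub_cancel_of_le (Finset.mem_Iic.mp hα)
          · intro q hq
            rw [Finset.HasAntidiagonal.mem_antidiagonal] at hq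
            have hq2 : νt - q.1 = q.2 := by rw [← hq]; exact add_tsub_cancel_left _ _
            exact Prod.ext rfl hq2
          · intro α _
            rfl
          · intro q hq
            rw [Finset.HasAntidiagonal.mem_antidiagonal] at hq
            have hq2 : νt - q.1 = q.2 := by rw [← hq]; exact add_tsub_cancel_left _ _
            show (MvPowerSeries.coeff q.1) B * (MvPowerSeries.coeff q.2) g
                = B q.1 * g (νt - q.1)
            rw [hq2]
            rfl
        rw [h1, h2, ← MvPowerSeries.coeff_mul, hBg1, MvPowerSeries.coeff_one]
        by_cases hz : νt = 0
        · subst hz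
          simp
        · rw [if_neg hz, zero_mul]
      rw [heq] at hsum2
      exact hsum2
    have hgrp2 : HasSum (fun νt : Fin N →₀ ℕ => if νt = 0 then (1:K) else 0) S :=
      hf2sum.prod_fiberwise hfib2
    have hS1 : S = 1 := hgrp2.unique (hasSum_ite_eq 0 1)
    have hFGone : F lam * G = 1 := by rw [← hSFG, hS1]
    have hGeq : G = (F lam)⁻¹ := eq_inv_of_mul_eq_one_left (by rwa [mul_comm] at hFGone)
    rw [← hGeq]
    exact hG
  have hratFg : AHG.RatOnDplus p a (fun lam => (F lam)⁻¹) := by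
    refine ⟨1, qB, ?_, ?_⟩
    · intro lam hlam
      rw [← hFeval lam, ← norm_ne_zero_iff, hFDplus lam hlam]
      positivity
    · intro lam hlam
      rw [← hFeval lam]
      simp [one_div]
  have hmemR'g : AHG.memR' p a g :=
    ⟨fun lam => (F lam)⁻¹, hconstUL _ hratFg, fun lam hlam => (hDopenMain lam hlam).2⟩
  have hRnorm : AHG.Rnorm B = (p:ℝ)⁻¹ := by
    have hbdd : BddAbove (Set.range fun ν : Fin N →₀ ℕ => ‖B ν‖) := by
      refine ⟨(p:ℝ)⁻¹, ?_⟩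
      rintro x ⟨ν, rfl⟩
      exact hBle ν
    rw [AHG.Rnorm]
    refine le_antisymm (ciSup_le hBle) ?_
    rw [← hB0norm]
    exact le_ciSup hbdd 0
  exact ⟨hmemR'B, ⟨g, hmemR'g, hBg1⟩, hRnorm, hBle, hB0, hB0norm,
    fun lam hlam => ⟨F lam, hHasSumF lam, hFDplus lam hlam⟩⟩
end
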